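/- arXiv:math/0007056 — 8 statements merged into one kernel-verified Lean document; each statement's English description precedes it below -/
import Mathlib

section
/- Let k be a field of characteristic p > 0, let V be a finite-dimensional k-vector space, and let L be a Lie subalgebra of End_k(V) (with the commutator bracket). Suppose L is nilpotent of nilpotence class e, i.e. C^e L = 0 where C^0 L = L and C^i L = [L, C^{i-1}L], and suppose that for each i ≥ 0 the subspace C^i L is spanned over k by elements Y satisfying Y^p = 0 (p-th power taken in the associative algebra End_k(V)). Then every X ∈ L satisfies X^{p^e} = 0 in End_k(V). -/
open Finset LinearMap

section
variable {k : Type*} [Field k] {p : ℕ} [Fact p.Prime] [CharP k p]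
variable {B : Type*} [Ring B] [Algebra k B]

-- choose mod p
lemma choose_cast_eq (i : ℕ) (h : i < p) : (((p-1).choose i : ℕ) : k) = (-1)^i := by
  induction i with
  | zero => simp
  | succ i ih =>
    have hi : i < p := Nat.lt_of_succ_lt h
    have hpascal : (p-1).choose i + (p-1).choose (i+1) = p.choose (i+1) := by
      have h1 : p - 1 + 1 = p := Nat.succ_pred_eq_of_pos (Fact.out : p.Prime).pos
      calc (p-1).choose i + (p-1).choose (i+1) = ((p-1)+1).choose (i+1) :=
            (Nat.choose_succ_succ' (p-1) i).symm ▸ rfl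
        _ = p.choose (i+1) := by rw [h1]
    have hdvd : (p : ℕ) ∣ p.choose (i+1) := by
      exact (Fact.out : p.Prime).dvd_choose_self (Nat.succ_ne_zero i) h
    have hcast : ((p.choose (i+1) : ℕ) : k) = 0 := by
      obtain ⟨c, hc⟩ := hdvd
      simp [hc, CharP.cast_eq_zero k p]
    have := congrArg (fun n : ℕ => (n : k)) hpascal
    simp only [Nat.cast_add] at this
    rw [ih hi, hcast] at this
    have : ((p-1).choose (i+1) : k) = -(-1)^i := by linear_combination this
    rw [this, pow_succ]
    ring
end

section
variable {k : Type*} [Field k] {p : ℕ} [Fact p.Prime] [CharP k p]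
variable {B : Type*} [Ring B] [Algebra k B]

lemma neg_one_pow_pred : ((-1 : k))^(p-1) = 1 := by
  rcases (Fact.out : p.Prime).eq_two_or_odd' with h | h
  · subst h; norm_num
    have h2 : (2 : k) = 0 := CharP.cast_eq_zero k 2
    linear_combination -h2
  · have : Even (p - 1) := Nat.Odd.sub_odd h odd_one
    exact this.neg_one_pow

lemma sum_conj_eq (a b : B) :
    ∑ i ∈ Finset.range p, a^i * b * a^(p-1-i) =
      ((mulLeft k a - mulRight k a)^(p-1)) b := by
  have hp1 : p - 1 + 1 = p := Nat.succ_pred_eq_of_pos (Fact.out : p.Prime).pos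
  have hc : Commute (mulLeft k a : Module.End k B) (-(mulRight k a : Module.End k B)) :=
    Commute.neg_right (R := Module.End k B) (commute_mulLeft_right a a)
  have hpow : (mulLeft k a - mulRight k a)^(p-1)
      = ∑ i ∈ Finset.range p, (mulLeft k a)^i * (-(mulRight k a))^(p-1-i) *
          ((p-1).choose i : Module.End k B) := by
    rw [sub_eq_add_neg, hc.add_pow, hp1]
  rw [hpow, LinearMap.sum_apply]
  refine Finset.sum_congr rfl fun i hi => ?_
  have hi' : i < p := Finset.mem_range.mp hi
  have hneg : (-(mulRight k a : Module.End k B))^(p-1-i) = (-1)^(p-1-i) * (mulRight k a : Module.End k B)^(p-1-i) := neg_pow (R := Module.End k B) _ _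
  have hcoeff : ((-1 : Module.End k B))^(p-1-i) * ((p-1).choose i : Module.End k B) = 1 := by
    have : ((-1 : Module.End k B))^(p-1-i) * ((p-1).choose i : Module.End k B)
        = algebraMap k (Module.End k B) ((-1)^(p-1-i) * ((p-1).choose i : k)) := by
      rw [map_mul, map_pow, map_neg, map_one, map_natCast]
    rw [this, choose_cast_eq i hi']
    have hexp : (p - 1 - i) + i = p - 1 := Nat.sub_add_cancel (Nat.le_sub_one_of_lt hi')
    rw [← pow_add, hexp, neg_one_pow_pred, map_one]
  calc a^i * b * a^(p-1-i)
      = ((mulLeft k a)^i * (mulRight k a)^(p-1-i)) b := by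
        rw [pow_mulLeft, pow_mulRight]; simp [mul_assoc]
    _ = ((mulLeft k a)^i * ((-1)^(p-1-i) * (mulRight k a)^(p-1-i)) *
          ((p-1).choose i : Module.End k B)) b := by
        have hop : ((-1 : Module.End k B))^(p-1-i) * (mulRight k a)^(p-1-i) *
            (((p-1).choose i : Module.End k B)) = (mulRight k a)^(p-1-i) := by
          rw [mul_assoc, ← (Nat.cast_commute ((p-1).choose i)
            ((mulRight k a)^(p-1-i))).eq, ← mul_assoc, hcoeff, one_mul]
        rw [mul_assoc ((mulLeft k a)^i), hop]
    _ = ((mulLeft k a)^i * (-(mulRight k a))^(p-1-i) *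
          ((p-1).choose i : Module.End k B)) b := by rw [hneg]
end

section
variable {k : Type*} [Field k] {p : ℕ} [Fact p.Prime] [CharP k p]
variable {B : Type*} [Ring B] [Algebra k B]

open Polynomial

lemma derivative_pow_noncomm (g : B[X]) (n : ℕ) :
    derivative (g^n) = ∑ j ∈ Finset.range n, g^j * derivative g * g^(n-1-j) := by
  induction n with
  | zero => simp
  | succ n ih =>
    rw [pow_succ, derivative_mul, ih, Finset.sum_range_succ, Finset.sum_mul]
    have h1 : ∀ j ∈ Finset.range n,
        g^j * derivative g * g^(n-1-j) * g = g^j * derivative g * g^(n+1-1-j) := by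
      intro j hj
      have hj' := Finset.mem_range.mp hj
      rw [mul_assoc (g^j * derivative g), ← pow_succ]
      congr 2
      omega
    rw [Finset.sum_congr rfl h1, Nat.add_sub_cancel, Nat.sub_self, pow_zero, mul_one]
end

section
variable {k : Type*} [Field k] {p : ℕ} [Fact p.Prime] [CharP k p]
variable {B : Type*} [Ring B] [Algebra k B]

open Polynomial

lemma jacobson_qual (M N : Submodule k B)
    (hMM : ∀ a ∈ M, ∀ b ∈ M, a * b - b * a ∈ N)
    (hMN : ∀ a ∈ M, ∀ b ∈ N, a * b - b * a ∈ N)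
    {x y : B} (hx : x ∈ M) (hy : y ∈ M) :
    ∃ n ∈ N, (x + y) ^ p = x ^ p + y ^ p + n := by
  have hp2 : 2 ≤ p := (Fact.out : p.Prime).two_le
  set G : B[X] := C x * X + C y with hG
  -- coefficients of G
  have hGc0 : G.coeff 0 = y := by simp [hG, coeff_C_mul_X]
  have hGc1 : G.coeff 1 = x := by simp [hG, coeff_C_mul_X, coeff_C]
  have hGcm : ∀ j, G.coeff j ∈ M := by
    intro j
    match j with
    | 0 => rw [hGc0]; exact hy
    | 1 => rw [hGc1]; exact hx
    | (j+2) =>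
      have : G.coeff (j+2) = 0 := by
        rw [hG, coeff_add, coeff_C_mul_X, coeff_C]
        simp
      rw [this]; exact M.zero_mem
  -- degree bound
  have hGdeg : G.natDegree ≤ 1 := by
    apply le_trans (natDegree_add_le _ _)
    simp only [max_le_iff]
    constructor
    · exact le_trans (natDegree_C_mul_le _ _) natDegree_X_le
    · simp
  have hGpdeg : (G ^ p).natDegree ≤ p :=
    le_trans natDegree_pow_le (by simpa using Nat.mul_le_mul_left p hGdeg)
  -- top coefficient
  have htop : ∀ n : ℕ, (G ^ n).coeff n = x ^ n := by
    intro n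
    induction n with
    | zero => simp
    | succ n ih =>
      have hdeg : (G ^ n).natDegree ≤ n :=
        le_trans natDegree_pow_le (by simpa using Nat.mul_le_mul_left n hGdeg)
      have h0 : (G ^ n).coeff (n + 1) = 0 :=
        coeff_eq_zero_of_natDegree_lt (lt_of_le_of_lt hdeg (Nat.lt_succ_self n))
      rw [pow_succ, hG]
      rw [mul_add, coeff_add, ← mul_assoc, coeff_mul_X, coeff_mul_C, coeff_mul_C, ih, h0,
        zero_mul, add_zero, ← pow_succ]
  -- constant coefficient
  have hconst : (G ^ p).coeff 0 = y ^ p := by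
    have h1 : constantCoeff (G ^ p) = (constantCoeff G) ^ p := map_pow _ _ _
    simpa [constantCoeff_apply, hGc0] using h1
  -- eval at 1 : sum of coefficients
  have heval : (x + y) ^ p = ∑ i ∈ Finset.range (p + 1), (G ^ p).coeff i := by
    have hφ := fun (a : B) => Commute.one_right a
    let φ : B[X] →+* B := eval₂RingHom' (RingHom.id B) 1 hφ
    have h1 : φ (G ^ p) = (φ G) ^ p := map_pow _ _ _
    have h2 : φ G = x + y := by
      show eval₂ (RingHom.id B) 1 G = x + y
      rw [hG, eval₂_add, eval₂_mul_noncomm _ _ (fun j => Commute.one_right _), eval₂_C, eval₂_X,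
        eval₂_C]
      simp
    have h3 : φ (G ^ p) = (G ^ p).eval 1 := rfl
    have h4 : (G ^ p).eval 1 = ∑ i ∈ Finset.range (p + 1), (G ^ p).coeff i * 1 ^ i :=
      eval_eq_sum_range' (lt_of_le_of_lt hGpdeg (Nat.lt_succ_self p)) 1
    simp only [one_pow, mul_one] at h4
    rw [← h1.symm.trans (h3.trans h4), h2]  -- might be wrong orientation
  -- bracket step
  have hbr : ∀ (S : Submodule k B), (∀ a ∈ M, ∀ b ∈ S, a * b - b * a ∈ N) →
      ∀ z : B[X], (∀ j, z.coeff j ∈ S) →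
      ∀ j, ((LinearMap.mulLeft k G - LinearMap.mulRight k G) z).coeff j ∈ N := by
    intro S hS z hz j
    have happ : (LinearMap.mulLeft k G - LinearMap.mulRight k G) z = G * z - z * G := by
      simp
    rw [happ, coeff_sub]
    have hGz : (G * z).coeff j = x * (X * z).coeff j + y * z.coeff j := by
      rw [hG, add_mul, coeff_add, mul_assoc, coeff_C_mul, coeff_C_mul]
    have hzG : (z * G).coeff j = ((z * C x) * X).coeff j + z.coeff j * y := by
      rw [hG, mul_add, coeff_add, ← mul_assoc, coeff_mul_C]
    rw [hGz, hzG]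
    match j with
    | 0 =>
      rw [mul_coeff_zero, mul_coeff_zero, coeff_X_zero, zero_mul, mul_zero, mul_zero]
      simpa using hS y hy _ (hz 0)
    | (j+1) =>
      rw [coeff_X_mul, coeff_mul_X, coeff_mul_C]
      have h := add_mem (hS x hx _ (hz j)) (hS y hy _ (hz (j+1)))
      convert h using 1
      abel
  have hCx : ∀ j, (C x : B[X]).coeff j ∈ M := by
    intro j
    rw [coeff_C]
    split
    · exact hx
    · exact M.zero_mem
  have hiter : ∀ m, ∀ j,
      (((LinearMap.mulLeft k G - LinearMap.mulRight k G) ^ (m+1)) (C x)).coeff j ∈ N := by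
    intro m
    induction m with
    | zero => rw [pow_one]; exact hbr M hMM _ hCx
    | succ m ih =>
      intro j
      rw [pow_succ', Module.End.mul_apply]
      exact hbr N hMN _ ih j
  have hDmem : ∀ j, (derivative (G ^ p)).coeff j ∈ N := by
    have hGder : derivative G = C x := by
      rw [hG]; simp
    have hD : derivative (G ^ p)
        = ((LinearMap.mulLeft k G - LinearMap.mulRight k G) ^ (p - 1)) (C x) := by
      rw [derivative_pow_noncomm, hGder]
      exact sum_conj_eq G (C x)
    intro j
    rw [hD]
    have hm : p - 1 = (p - 2) + 1 := by omega
    rw [hm]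
    exact hiter (p - 2) j
  have hsmem : ∀ i, 1 ≤ i → i < p → (G ^ p).coeff i ∈ N := by
    intro i h1 h2
    have hd := coeff_derivative (G ^ p) (i - 1)
    have hi1 : i - 1 + 1 = i := by omega
    rw [hi1] at hd
    have hcast : ((i - 1 : ℕ) : B) + 1 = ((i : ℕ) : B) := by
      have hc := congrArg (fun n : ℕ => (n : B)) hi1
      push_cast at hc
      exact hc
    rw [hcast] at hd
    have hmem := hDmem (i - 1)
    rw [hd] at hmem
    have halg : (G ^ p).coeff i * ((i : ℕ) : B) = ((i : ℕ) : k) • (G ^ p).coeff i := by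
      rw [← map_natCast (algebraMap k B) i, ← Algebra.commutes, ← Algebra.smul_def]
    rw [halg] at hmem
    have hne : ((i : ℕ) : k) ≠ 0 := by
      rw [Ne, CharP.cast_eq_zero_iff k p]
      intro hdvd
      have := Nat.le_of_dvd (by omega) hdvd
      omega
    have hfin := N.smul_mem (((i : ℕ) : k))⁻¹ hmem
    rwa [smul_smul, inv_mul_cancel₀ hne, one_smul] at hfin
  refine ⟨∑ i ∈ Finset.range (p - 1), (G ^ p).coeff (i + 1), ?_, ?_⟩
  · exact Submodule.sum_mem _ fun i hi => hsmem (i + 1) (by omega)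
      (by have := Finset.mem_range.mp hi; omega)
  · rw [heval, Finset.sum_range_succ']
    have hp1 : p = (p - 1) + 1 := by omega
    have hsplit : ∑ i ∈ Finset.range p, (G ^ p).coeff (i + 1)
        = ∑ i ∈ Finset.range (p - 1), (G ^ p).coeff (i + 1) + (G ^ p).coeff p := by
      calc ∑ i ∈ Finset.range p, (G ^ p).coeff (i + 1)
          = ∑ i ∈ Finset.range ((p - 1) + 1), (G ^ p).coeff (i + 1) := by rw [← hp1]
        _ = ∑ i ∈ Finset.range (p - 1), (G ^ p).coeff (i + 1) + (G ^ p).coeff ((p - 1) + 1) :=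
            Finset.sum_range_succ _ _
        _ = ∑ i ∈ Finset.range (p - 1), (G ^ p).coeff (i + 1) + (G ^ p).coeff p := by rw [← hp1]
    rw [hsplit, hconst, htop p]
    abel
end

section
variable {k : Type*} [Field k] {p : ℕ} [Fact p.Prime] [CharP k p]
variable {B : Type*} [Ring B] [Algebra k B]

lemma jacobson_sum {ι : Type*} (M N : Submodule k B)
    (hMM : ∀ a ∈ M, ∀ b ∈ M, a * b - b * a ∈ N)
    (hMN : ∀ a ∈ M, ∀ b ∈ N, a * b - b * a ∈ N)
    (t : Finset ι) (f : ι → B) :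
    (∀ j ∈ t, f j ∈ M) → ∃ n ∈ N, (∑ j ∈ t, f j) ^ p = ∑ j ∈ t, f j ^ p + n := by
  classical
  induction t using Finset.induction_on with
  | empty =>
    intro _
    exact ⟨0, N.zero_mem, by simp [zero_pow (Fact.out : p.Prime).ne_zero]⟩
  | @insert a s ha ih =>
    intro hf
    obtain ⟨n₂, hn₂, h₂⟩ := ih fun j hj => hf j (Finset.mem_insert_of_mem hj)
    have hS : (∑ j ∈ s, f j) ∈ M :=
      Submodule.sum_mem _ fun j hj => hf j (Finset.mem_insert_of_mem hj)
    obtain ⟨n₁, hn₁, h₁⟩ := jacobson_qual (p := p) M N hMM hMN (hf a (Finset.mem_insert_self a s)) hS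
    refine ⟨n₁ + n₂, add_mem hn₁ hn₂, ?_⟩
    rw [Finset.sum_insert ha, Finset.sum_insert ha, h₁, h₂]
    abel
end


attribute [local instance 100] LieRing.ofAssociativeRing

/-- Let `k` be a field of characteristic `p > 0`, `V` a finite-dimensional
`k`-vector space, and `L` a Lie subalgebra of `End_k(V)` (commutator bracket) which is
nilpotent of class `e` (i.e. `C^e L = 0`), such that each term `C^i L` of the lower central
series is spanned over `k` by elements `Y` with `Y ^ p = 0` in `End_k(V)`.
Then every `X ∈ L` satisfies `X ^ (p ^ e) = 0` in `End_k(V)`. -/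
theorem stmt0 {k : Type*} [Field k] (p : ℕ) [Fact p.Prime] [CharP k p]
    {V : Type*} [AddCommGroup V] [Module k V] [FiniteDimensional k V]
    (L : LieSubalgebra k (Module.End k V)) (e : ℕ)
    (hnil : LieModule.lowerCentralSeries k L L e = ⊥)
    (hspan : ∀ i : ℕ, ∃ s : Set L,
      (∀ Y ∈ s, (Y : Module.End k V) ^ p = 0) ∧
      Submodule.span k s = (LieModule.lowerCentralSeries k L L i).toSubmodule)
    (X : L) : (X : Module.End k V) ^ (p ^ e) = 0 := by
  classical
  set ι : L →ₗ[k] Module.End k V := L.incl.toLinearMap with hι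
  have hιapp : ∀ z : L, ι z = (z : Module.End k V) := fun z => rfl
  set Mi : ℕ → Submodule k (Module.End k V) :=
    fun i => (LieModule.lowerCentralSeries k L L i).toSubmodule.map ι with hMi
  have hmem : ∀ i (z : Module.End k V),
      z ∈ Mi i ↔ ∃ u : L, u ∈ LieModule.lowerCentralSeries k L L i ∧ (u : Module.End k V) = z := by
    intro i z
    constructor
    · rintro ⟨u, hu, rfl⟩
      exact ⟨u, (LieSubmodule.mem_toSubmodule _).mp hu, rfl⟩
    · rintro ⟨u, hu, rfl⟩
      exact ⟨u, (LieSubmodule.mem_toSubmodule _).mpr hu, rfl⟩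
  have hbrk : ∀ i j, ∀ a ∈ Mi i, ∀ b ∈ Mi j,
      a * b - b * a ∈ Mi (j + 1) := by
    intro i j a ha b hb
    obtain ⟨a', ha', rfl⟩ := (hmem i a).mp ha
    obtain ⟨b', hb', rfl⟩ := (hmem j b).mp hb
    refine (hmem (j+1) _).mpr ⟨⁅a', b'⁆, ?_, ?_⟩
    · rw [LieModule.lowerCentralSeries_succ]
      exact LieSubmodule.lie_mem_lie (LieSubmodule.mem_top a') hb'
    · rw [LieSubalgebra.coe_bracket, Ring.lie_def]
  have hbrk' : ∀ i, ∀ a ∈ Mi i, ∀ b ∈ Mi (i+1), a * b - b * a ∈ Mi (i+1) := by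
    intro i a ha b hb
    obtain ⟨u, hu, hue⟩ := (hmem _ _).mp (hbrk i (i+1) a ha b hb)
    exact (hmem _ _).mpr ⟨u, LieModule.antitone_lowerCentralSeries k L L (Nat.le_succ (i+1)) hu, hue⟩
  have key : ∀ i : ℕ, ∃ Z : L, Z ∈ LieModule.lowerCentralSeries k L L i ∧
      (X : Module.End k V) ^ (p ^ i) = (Z : Module.End k V) := by
    intro i
    induction i with
    | zero => exact ⟨X, LieSubmodule.mem_top X, by rw [pow_zero, pow_one]⟩
    | succ i ih =>
      obtain ⟨Z, hZ, hXZ⟩ := ih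
      obtain ⟨s, hs0, hs1⟩ := hspan i
      have hZs : Z ∈ Submodule.span k s := by
        rw [hs1]
        exact hZ
      obtain ⟨c, hcs, hcsum⟩ := Submodule.mem_span_set.mp hZs
      have hsum : (Z : Module.End k V) = ∑ l ∈ c.support, ι (c l • l) := by
        rw [← hιapp Z, ← hcsum, Finsupp.sum, map_sum]
      have hf : ∀ l ∈ c.support, ι (c l • l) ∈ Mi i := by
        intro l hl
        refine (hmem i _).mpr ⟨c l • l, ?_, rfl⟩
        have hls : (l : L) ∈ Submodule.span k s := Submodule.subset_span (hcs hl)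
        rw [hs1] at hls
        exact Submodule.smul_mem _ _ hls
      obtain ⟨n, hn, hpow⟩ := jacobson_sum (p := p) (Mi i) (Mi (i+1))
        (hbrk i i) (hbrk' i) c.support (fun l => ι (c l • l)) hf
      have hzero : ∀ l ∈ c.support, (ι (c l • l)) ^ p = 0 := by
        intro l hl
        have : ι (c l • l) = c l • (l : Module.End k V) := by
          rw [map_smul, hιapp]
        rw [this, smul_pow, hs0 l (hcs hl), smul_zero]
      have hZp : (Z : Module.End k V) ^ p = n := by
        rw [hsum, hpow, Finset.sum_congr rfl hzero]
        simp
      obtain ⟨Z', hZ', hZ'e⟩ := (hmem (i+1) n).mp hn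
      refine ⟨Z', hZ', ?_⟩
      rw [pow_succ, pow_mul, hXZ, hZp, hZ'e]
  obtain ⟨Z, hZ, hXZ⟩ := key e
  rw [hnil, LieSubmodule.mem_bot] at hZ
  rw [hXZ, hZ]
  rfl
end

section
/- Let p be a prime and let G be a nilpotent group of nilpotence class e, i.e. C^e G = 1 where C^0 G = G and C^i G = (G, C^{i-1}G) is generated by commutators. Suppose that for each i ≥ 0 the subgroup C^i G is generated by elements of order dividing p. Then x^{p^e} = 1 for every x ∈ G; that is, the exponent of G divides p^e. -/
/-- Let `p` be a prime and `G` a nilpotent group of nilpotence class `e`,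
i.e. `C^e G = 1` for the lower central series. Suppose that for each `i ≥ 0` the subgroup
`C^i G` is generated by elements of order dividing `p`. Then `x ^ (p ^ e) = 1` for every
`x ∈ G`; that is, the exponent of `G` divides `p ^ e`. -/
theorem stmt1 {G : Type*} [Group G] (p : ℕ) (hp : p.Prime) (e : ℕ)
    (hnil : (⊤ : Subgroup G).lowerCentralSeries e = ⊥)
    (hgen : ∀ i : ℕ, ∃ s : Set G,
      (∀ y ∈ s, y ^ p = 1) ∧ Subgroup.closure s = (⊤ : Subgroup G).lowerCentralSeries i)
    (x : G) : x ^ (p ^ e) = 1 := by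
  -- Key step: pth powers descend one level in the lower central series.
  have step : ∀ i : ℕ, ∀ y ∈ (⊤ : Subgroup G).lowerCentralSeries i,
      y ^ p ∈ (⊤ : Subgroup G).lowerCentralSeries (i + 1) := by
    intro i y hy
    obtain ⟨s, hs1, hs2⟩ := hgen i
    set N := (⊤ : Subgroup G).lowerCentralSeries (i + 1) with hN
    let π := QuotientGroup.mk' N
    -- image of C^i in G/N is central
    have hcent : ∀ z ∈ (⊤ : Subgroup G).lowerCentralSeries i, π z ∈ Subgroup.center (G ⧸ N) := by
      intro z hz
      rw [Subgroup.mem_center_iff]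
      intro q
      obtain ⟨g, rfl⟩ := QuotientGroup.mk'_surjective N q
      have hc : z * g * z⁻¹ * g⁻¹ ∈ N := by
        rw [hN, Subgroup.mem_lowerCentralSeries_succ_iff]
        exact Subgroup.subset_closure ⟨z, hz, g, Subgroup.mem_top g, rfl⟩
      have : π (z * g * z⁻¹ * g⁻¹) = 1 := by
        rw [← MonoidHom.mem_ker, QuotientGroup.ker_mk']; exact hc
      have h2 : π z * π g * (π z)⁻¹ * (π g)⁻¹ = 1 := by
        simpa [map_mul, map_inv] using this
      have := mul_eq_one_iff_eq_inv.mp h2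
      group at this ⊢
      calc π g * π z = (π z * π g * (π z)⁻¹ * (π g)⁻¹)⁻¹ * (π z * π g) := by group
        _ = π z * π g := by rw [h2]; group
    -- the set of central elements of order dividing p, together with membership in image
    have key : ∀ z ∈ (⊤ : Subgroup G).lowerCentralSeries i, (π z) ^ p = 1 := by
      intro z hz
      rw [← hs2] at hz
      refine Subgroup.closure_induction ?_ ?_ ?_ ?_ hz
      · intro w hw
        rw [← map_pow, hs1 w hw, map_one]
      · simp
      · intro a b ha hb hap hbp
        have hca : π a ∈ Subgroup.center (G ⧸ N) :=
          hcent a (hs2 ▸ ha)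
        have hcomm : Commute (π a) (π b) :=
          (Subgroup.mem_center_iff.mp hca (π b)).symm
        rw [map_mul, hcomm.mul_pow, hap, hbp, one_mul]
      · intro a ha hap
        rw [map_inv, inv_pow, hap, inv_one]
    have : π (y ^ p) = 1 := by rw [map_pow]; exact key y hy
    rwa [← QuotientGroup.ker_mk' N, MonoidHom.mem_ker]
  -- Iterate: x^(p^n) ∈ C^n G
  have main : ∀ n : ℕ, x ^ (p ^ n) ∈ (⊤ : Subgroup G).lowerCentralSeries n := by
    intro n
    induction n with
    | zero => simp [Subgroup.lowerCentralSeries_zero]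
    | succ n ih =>
      have := step n _ ih
      rwa [← pow_mul, ← pow_succ] at this
  have := main e
  rwa [hnil, Subgroup.mem_bot] at this
end

section
/- Let p be a prime and let F(t) = exp(t + t^p/p + t^{p^2}/p^2 + ⋯) ∈ ℚ[[t]] be the Artin–Hasse exponential series (the formal exponential applied to the series ∑_{i≥0} t^{p^i}/p^i, which has zero constant term). Then every coefficient of F(t) lies in ℤ_(p); that is, each coefficient is a rational number with nonnegative p-adic valuation. -/
open Classical in
/-- The series `∑_{i ≥ 0} t^(p^i) / p^i ∈ ℚ[[t]]`: its coefficient at `t^n` is `1/n = 1/p^i`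
when `n = p^i` is a power of `p`, and `0` otherwise. -/
noncomputable def artinHasseArg (p : ℕ) : PowerSeries ℚ :=
  PowerSeries.mk fun n => if ∃ i : ℕ, p ^ i = n then (n : ℚ)⁻¹ else 0

/-- The Artin–Hasse exponential `F(t) = exp(∑_{i ≥ 0} t^(p^i)/p^i)`, where the formal
exponential of a series `S` with zero constant term has `n`-th coefficient
`∑_{k} coeff n (S^k) / k!` (the terms with `k > n` vanish). -/
noncomputable def artinHasseSeries (p : ℕ) : PowerSeries ℚ :=
  PowerSeries.mk fun n =>
    ∑ k ∈ Finset.range (n + 1), ((k.factorial : ℚ)⁻¹) * PowerSeries.coeff n (artinHasseArg p ^ k)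

open PowerSeries Finset

namespace AHaux

/-- formal exponential, coefficientwise -/
noncomputable def Exp (A : PowerSeries ℚ) : PowerSeries ℚ :=
  PowerSeries.mk fun n =>
    ∑ k ∈ Finset.range (n + 1), ((k.factorial : ℚ)⁻¹) * PowerSeries.coeff n (A ^ k)

theorem coeff_Exp (A : PowerSeries ℚ) (n : ℕ) :
    PowerSeries.coeff n (Exp A) =
      ∑ k ∈ Finset.range (n + 1), ((k.factorial : ℚ)⁻¹) * PowerSeries.coeff n (A ^ k) :=
  PowerSeries.coeff_mk _ _

theorem coeff_pow_eq_zero {A : PowerSeries ℚ} (hA : PowerSeries.constantCoeff A = 0)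
    {n k : ℕ} (h : n < k) : PowerSeries.coeff n (A ^ k) = 0 := by
  have hX : (X : PowerSeries ℚ) ^ k ∣ A ^ k :=
    pow_dvd_pow_of_dvd (PowerSeries.X_dvd_iff.2 hA) k
  exact PowerSeries.X_pow_dvd_iff.1 hX n h

theorem coeff_mul_pow_eq_zero {A B : PowerSeries ℚ} (hA : PowerSeries.constantCoeff A = 0)
    (hB : PowerSeries.constantCoeff B = 0) {n k l : ℕ} (h : n < k + l) :
    PowerSeries.coeff n (A ^ k * B ^ l) = 0 := by
  have hX : (X : PowerSeries ℚ) ^ (k + l) ∣ A ^ k * B ^ l := by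
    rw [pow_add]
    exact mul_dvd_mul (pow_dvd_pow_of_dvd (PowerSeries.X_dvd_iff.2 hA) k)
      (pow_dvd_pow_of_dvd (PowerSeries.X_dvd_iff.2 hB) l)
  exact PowerSeries.X_pow_dvd_iff.1 hX n h

theorem coeff_Exp_ext {A : PowerSeries ℚ} (hA : PowerSeries.constantCoeff A = 0)
    {m N : ℕ} (h : m ≤ N) :
    PowerSeries.coeff m (Exp A) =
      ∑ k ∈ Finset.range (N + 1), ((k.factorial : ℚ)⁻¹) * PowerSeries.coeff m (A ^ k) := by
  rw [coeff_Exp]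
  refine Finset.sum_subset (by simpa [Finset.range_subset_range] using h) ?_
  intro k hk hk'
  rw [coeff_pow_eq_zero hA (by simp at hk hk'; omega), mul_zero]

/-- reindexing a triangular double sum -/
theorem triangle_sum (n : ℕ) (f : ℕ → ℕ → ℚ) (hf : ∀ k l, n < k + l → f k l = 0) :
    ∑ m ∈ Finset.range (n + 1), ∑ k ∈ Finset.range (m + 1), f k (m - k)
      = ∑ k ∈ Finset.range (n + 1), ∑ l ∈ Finset.range (n + 1), f k l := by
  classical
  have hRHS : ∑ k ∈ Finset.range (n + 1), ∑ l ∈ Finset.range (n + 1), f k l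
      = ∑ x ∈ (Finset.range (n+1) ×ˢ Finset.range (n+1)).filter
          (fun x => x.1 + x.2 ≤ n), f x.1 x.2 := by
    rw [Finset.sum_filter, Finset.sum_product]
    refine Finset.sum_congr rfl fun k _ => Finset.sum_congr rfl fun l _ => ?_
    by_cases h : k + l ≤ n
    · simp [h]
    · simp [h, hf k l (by omega)]
  rw [hRHS, Finset.sum_sigma']
  refine Finset.sum_nbij' (fun x => (x.2, x.1 - x.2)) (fun x => ⟨x.1 + x.2, x.1⟩) ?_ ?_ ?_ ?_ ?_
  · rintro ⟨m, k⟩ h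
    simp only [Finset.mem_sigma, Finset.mem_range] at h
    simp only [Finset.mem_filter, Finset.mem_product, Finset.mem_range]
    omega
  · rintro ⟨k, l⟩ h
    simp only [Finset.mem_filter, Finset.mem_product, Finset.mem_range] at h
    simp only [Finset.mem_sigma, Finset.mem_range]
    omega
  · rintro ⟨m, k⟩ h
    simp only [Finset.mem_sigma, Finset.mem_range] at h
    have : k + (m - k) = m := by omega
    simp only [this]
  · rintro ⟨k, l⟩ h
    simp only [Finset.mem_filter, Finset.mem_product, Finset.mem_range] at h
    have : k + l - k = l := by omega
    simp only [this]
  · rintro ⟨m, k⟩ h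
    rfl

theorem Exp_add {A B : PowerSeries ℚ} (hA : PowerSeries.constantCoeff A = 0)
    (hB : PowerSeries.constantCoeff B = 0) :
    Exp (A + B) = Exp A * Exp B := by
  ext n
  rw [PowerSeries.coeff_mul]
  have key : ∀ x : ℕ × ℕ, x ∈ Finset.HasAntidiagonal.antidiagonal n →
      PowerSeries.coeff x.1 (Exp A) * PowerSeries.coeff x.2 (Exp B)
        = ∑ k ∈ Finset.range (n+1), ∑ l ∈ Finset.range (n+1),
            ((k.factorial : ℚ)⁻¹ * (l.factorial : ℚ)⁻¹)
              * (PowerSeries.coeff x.1 (A ^ k) * PowerSeries.coeff x.2 (B ^ l)) := by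
    intro x hx
    rw [Finset.HasAntidiagonal.mem_antidiagonal] at hx
    rw [coeff_Exp_ext hA (show x.1 ≤ n by omega), coeff_Exp_ext hB (show x.2 ≤ n by omega),
      Finset.sum_mul_sum]
    refine Finset.sum_congr rfl fun k _ => Finset.sum_congr rfl fun l _ => ?_
    ring
  rw [Finset.sum_congr rfl key]
  rw [Finset.sum_comm]
  have swap2 : ∀ k ∈ Finset.range (n+1),
      (∑ x ∈ Finset.HasAntidiagonal.antidiagonal n, ∑ l ∈ Finset.range (n+1),
        ((k.factorial : ℚ)⁻¹ * (l.factorial : ℚ)⁻¹)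
          * (PowerSeries.coeff x.1 (A ^ k) * PowerSeries.coeff x.2 (B ^ l)))
      = ∑ l ∈ Finset.range (n+1), ((k.factorial : ℚ)⁻¹ * (l.factorial : ℚ)⁻¹)
          * PowerSeries.coeff n (A ^ k * B ^ l) := by
    intro k _
    rw [Finset.sum_comm]
    refine Finset.sum_congr rfl fun l _ => ?_
    rw [PowerSeries.coeff_mul, Finset.mul_sum]
  rw [Finset.sum_congr rfl swap2]
  -- now the RHS of goal is done; compute LHS (coeff of Exp (A+B))
  rw [coeff_Exp]
  have hAB : PowerSeries.constantCoeff (A + B) = 0 := by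
    rw [map_add, hA, hB, add_zero]
  calc ∑ m ∈ Finset.range (n + 1), ((m.factorial : ℚ)⁻¹) * PowerSeries.coeff n ((A + B) ^ m)
      = ∑ m ∈ Finset.range (n + 1), ∑ k ∈ Finset.range (m + 1),
          ((k.factorial : ℚ)⁻¹ * ((m - k).factorial : ℚ)⁻¹)
            * PowerSeries.coeff n (A ^ k * B ^ (m - k)) := by
        refine Finset.sum_congr rfl fun m _ => ?_
        rw [add_pow, map_sum, Finset.mul_sum]
        refine Finset.sum_congr rfl fun k hk => ?_
        rw [Finset.mem_range] at hk
        have hk' : k ≤ m := by omega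
        have hfact : ((m.factorial : ℚ))⁻¹ * (m.choose k : ℚ)
            = (k.factorial : ℚ)⁻¹ * ((m - k).factorial : ℚ)⁻¹ := by
          have := Nat.choose_mul_factorial_mul_factorial hk'
          field_simp
          push_cast [← this]
          ring
        rw [show ((m.choose k : ℕ) : PowerSeries ℚ) = PowerSeries.C ((m.choose k : ℕ) : ℚ) by
          push_cast [map_natCast]; rfl]
        rw [PowerSeries.coeff_mul_C]
        rw [← hfact]
        ring
    _ = ∑ k ∈ Finset.range (n + 1), ∑ l ∈ Finset.range (n + 1),
          ((k.factorial : ℚ)⁻¹ * (l.factorial : ℚ)⁻¹)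
            * PowerSeries.coeff n (A ^ k * B ^ l) := by
        exact triangle_sum n
          (fun k l => ((k.factorial : ℚ)⁻¹ * (l.factorial : ℚ)⁻¹)
            * PowerSeries.coeff n (A ^ k * B ^ l))
          (fun k l h => by beta_reduce; rw [coeff_mul_pow_eq_zero hA hB h, mul_zero])

end AHaux

namespace AH2
open AHaux

theorem Exp_zero : Exp 0 = 1 := by
  ext n
  rw [coeff_Exp]
  rcases Nat.eq_zero_or_pos n with hn | hn
  · subst hn
    simp
  · rw [PowerSeries.coeff_one, if_neg (by omega)]
    refine Finset.sum_eq_zero fun k hk => ?_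
    rcases Nat.eq_zero_or_pos k with hk0 | hk0
    · subst hk0; simp only [pow_zero, PowerSeries.coeff_one, if_neg (by omega : ¬ n = 0)]
      simp
    · rw [zero_pow (by omega), map_zero, mul_zero]

theorem Exp_pow {A : PowerSeries ℚ} (hA : PowerSeries.constantCoeff A = 0) (m : ℕ) :
    (Exp A) ^ m = Exp ((m : ℚ) • A) := by
  induction m with
  | zero => simp [Exp_zero]
  | succ m ih =>
    have h1 : ((m : ℚ) + 1) • A = (m : ℚ) • A + A := by
      rw [add_smul, one_smul]
    rw [pow_succ, ih, show ((m + 1 : ℕ) : ℚ) = (m : ℚ) + 1 by push_cast; ring, h1,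
      Exp_add (by simp [hA]) hA]

/-- substitution t ↦ t^p, coefficientwise -/
noncomputable def expand (p : ℕ) (A : PowerSeries ℚ) : PowerSeries ℚ :=
  PowerSeries.mk fun n => if p ∣ n then PowerSeries.coeff (n / p) A else 0

theorem coeff_expand (p : ℕ) (A : PowerSeries ℚ) (n : ℕ) :
    PowerSeries.coeff n (expand p A) =
      if p ∣ n then PowerSeries.coeff (n / p) A else 0 :=
  PowerSeries.coeff_mk _ _

variable {p : ℕ} (hp : 2 ≤ p)
include hp

theorem expand_mul (A B : PowerSeries ℚ) :
    expand p (A * B) = expand p A * expand p B := by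
  ext n
  rw [PowerSeries.coeff_mul, coeff_expand]
  by_cases hn : p ∣ n
  · obtain ⟨m, rfl⟩ := hn
    rw [if_pos ⟨m, rfl⟩, Nat.mul_div_cancel_left m (by omega), PowerSeries.coeff_mul]
    rw [show (∑ x ∈ Finset.HasAntidiagonal.antidiagonal (p * m),
        PowerSeries.coeff x.1 (expand p A) * PowerSeries.coeff x.2 (expand p B))
      = ∑ x ∈ (Finset.HasAntidiagonal.antidiagonal (p * m)).filter (fun x => p ∣ x.1),
          PowerSeries.coeff x.1 (expand p A) * PowerSeries.coeff x.2 (expand p B) from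
      (Finset.sum_filter_of_ne (fun x hx h => by
        by_contra hc
        rw [coeff_expand, if_neg hc, zero_mul] at h
        exact h rfl)).symm]
    refine (Finset.sum_nbij' (fun x => (x.1 / p, x.2 / p)) (fun x => (p * x.1, p * x.2))
      ?_ ?_ ?_ ?_ ?_).symm
    · rintro ⟨a, b⟩ h
      simp only [Finset.mem_filter, Finset.HasAntidiagonal.mem_antidiagonal] at h
      obtain ⟨hab, ha⟩ := h
      have hb : p ∣ b := (Nat.dvd_add_right ha).1 (by rw [hab]; exact ⟨m, rfl⟩)
      simp only [Finset.HasAntidiagonal.mem_antidiagonal]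
      have : p * (a / p + b / p) = p * m := by
        rw [Nat.mul_add, Nat.mul_div_cancel' ha, Nat.mul_div_cancel' hb, hab]
      exact Nat.eq_of_mul_eq_mul_left (by omega) this
    · rintro ⟨a, b⟩ h
      simp only [Finset.HasAntidiagonal.mem_antidiagonal] at h
      simp only [Finset.mem_filter, Finset.HasAntidiagonal.mem_antidiagonal]
      exact ⟨by rw [← Nat.mul_add, h], ⟨a, rfl⟩⟩
    · rintro ⟨a, b⟩ h
      simp only [Finset.mem_filter, Finset.HasAntidiagonal.mem_antidiagonal] at h
      obtain ⟨hab, ha⟩ := h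
      have hb : p ∣ b := (Nat.dvd_add_right ha).1 (by rw [hab]; exact ⟨m, rfl⟩)
      simp only [Prod.mk.injEq]
      exact ⟨Nat.mul_div_cancel' ha, Nat.mul_div_cancel' hb⟩
    · rintro ⟨a, b⟩ h
      simp only [Prod.mk.injEq]
      constructor <;> rw [Nat.mul_div_cancel_left _ (by omega : 0 < p)]
    · rintro ⟨a, b⟩ h
      simp only [Finset.mem_filter, Finset.HasAntidiagonal.mem_antidiagonal] at h
      obtain ⟨hab, ha⟩ := h
      have hb : p ∣ b := (Nat.dvd_add_right ha).1 (by rw [hab]; exact ⟨m, rfl⟩)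
      rw [coeff_expand, coeff_expand, if_pos ha, if_pos hb]
  · rw [if_neg hn]
    refine (Finset.sum_eq_zero fun x hx => ?_).symm
    rw [Finset.HasAntidiagonal.mem_antidiagonal] at hx
    rw [coeff_expand, coeff_expand]
    by_cases h1 : p ∣ x.1
    · rw [if_neg (fun h2 => hn (hx ▸ Nat.dvd_add h1 h2)), mul_zero]
    · rw [if_neg h1, zero_mul]

theorem expand_pow (A : PowerSeries ℚ) (k : ℕ) :
    expand p (A ^ k) = (expand p A) ^ k := by
  induction k with
  | zero =>
    simp only [pow_zero]
    ext n
    rw [coeff_expand]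
    rcases Nat.eq_zero_or_pos n with hn | hn
    · subst hn; simp
    · have h1 : (PowerSeries.coeff n) (1 : PowerSeries ℚ) = 0 := by
        rw [PowerSeries.coeff_one, if_neg (by omega)]
      rw [h1]
      by_cases h : p ∣ n
      · rw [if_pos h, PowerSeries.coeff_one, if_neg ?_]
        have h2 : p ≤ n := Nat.le_of_dvd hn h
        have h3 : 1 ≤ n / p := (Nat.one_le_div_iff (by omega)).2 h2
        omega
      · rw [if_neg h]
  | succ k ih => rw [pow_succ, expand_mul hp, ih, pow_succ]

omit hp in
theorem expand_constantCoeff {A : PowerSeries ℚ} (hA : PowerSeries.constantCoeff A = 0) :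
    PowerSeries.constantCoeff (expand p A) = 0 := by
  rw [← PowerSeries.coeff_zero_eq_constantCoeff_apply, coeff_expand, if_pos (dvd_zero p),
    Nat.zero_div, PowerSeries.coeff_zero_eq_constantCoeff_apply, hA]

theorem expand_Exp {A : PowerSeries ℚ} (hA : PowerSeries.constantCoeff A = 0) :
    Exp (expand p A) = expand p (Exp A) := by
  ext n
  rw [coeff_Exp, coeff_expand]
  by_cases hn : p ∣ n
  · rw [if_pos hn]
    have hdiv : n / p ≤ n := Nat.div_le_self n p
    rw [coeff_Exp_ext hA hdiv]
    refine Finset.sum_congr rfl fun k hk => ?_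
    rw [← expand_pow hp, coeff_expand, if_pos hn]
  · rw [if_neg hn]
    refine Finset.sum_eq_zero fun k hk => ?_
    rw [← expand_pow hp, coeff_expand, if_neg hn, mul_zero]

end AH2

namespace AH3
open AHaux AH2

theorem AH_eq_Exp (p : ℕ) : artinHasseSeries p = Exp (artinHasseArg p) := rfl

open Classical in
theorem coeff_arg (p n : ℕ) : PowerSeries.coeff n (artinHasseArg p)
    = if ∃ i : ℕ, p ^ i = n then (n : ℚ)⁻¹ else 0 := by
  rw [artinHasseArg, PowerSeries.coeff_mk]

variable {p : ℕ} (hp : p.Prime)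
include hp

theorem arg_cc : PowerSeries.constantCoeff (artinHasseArg p) = 0 := by
  rw [← PowerSeries.coeff_zero_eq_constantCoeff_apply, coeff_arg,
    if_neg (by push_neg; exact fun i => pow_ne_zero i hp.ne_zero)]

theorem arg_identity :
    PowerSeries.C (p : ℚ) * artinHasseArg p
      = PowerSeries.C (p : ℚ) * X + expand p (artinHasseArg p) := by
  have hp2 : 2 ≤ p := hp.two_le
  ext n
  rw [map_add, PowerSeries.coeff_C_mul, PowerSeries.coeff_C_mul, coeff_expand,
    PowerSeries.coeff_X, coeff_arg]
  rcases Nat.eq_zero_or_pos n with rfl | hn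
  · rw [if_neg (by push_neg; exact fun i => pow_ne_zero i hp.ne_zero),
      if_pos (dvd_zero p), if_neg (by omega), Nat.zero_div, coeff_arg,
      if_neg (by push_neg; exact fun i => pow_ne_zero i hp.ne_zero)]
    simp
  rcases eq_or_ne n 1 with rfl | hn1
  · rw [if_pos ⟨0, pow_zero p⟩, if_pos rfl, if_neg (fun h => by
      have := Nat.le_of_dvd (by omega) h; omega)]
    simp
  -- n ≥ 2
  by_cases hpow : ∃ i : ℕ, p ^ i = n
  · obtain ⟨i, rfl⟩ := hpow
    have hi : 1 ≤ i := by
      by_contra hi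
      exact hn1 (by interval_cases i; simpa using rfl)
    have hdvd : p ∣ p ^ i := dvd_pow_self p (by omega)
    rw [if_pos ⟨i, rfl⟩, if_neg hn1, if_pos hdvd, coeff_arg]
    have hdiv : p ^ i / p = p ^ (i - 1) := by
      conv_lhs => rw [show i = (i-1) + 1 by omega, pow_succ, Nat.mul_div_cancel _ (by omega : 0 < p)]
    rw [hdiv, if_pos ⟨i - 1, rfl⟩]
    have hcast : ((p ^ (i-1) : ℕ) : ℚ) = ((p ^ i : ℕ) : ℚ) / (p : ℚ) := by
      rw [show i = (i-1) + 1 by omega]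
      push_cast [pow_succ]
      field_simp
    rw [hcast, mul_zero, zero_add]
    have h0 : ((p ^ i : ℕ) : ℚ) ≠ 0 := by positivity
    field_simp
  · rw [if_neg hpow, if_neg hn1, mul_zero, zero_add]
    symm
    by_cases hdvd : p ∣ n
    · rw [if_pos hdvd, coeff_arg, if_neg ?_]
      push_neg
      intro j hj
      exact hpow ⟨j + 1, by rw [pow_succ, hj, mul_comm, Nat.mul_div_cancel' hdvd]⟩
    · rw [if_neg hdvd]

end AH3

namespace AH4
open AHaux AH2 AH3

noncomputable def Eseries (p : ℕ) : PowerSeries ℚ := Exp (PowerSeries.C (p : ℚ) * X)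

theorem coeff_Eseries (p n : ℕ) :
    PowerSeries.coeff n (Eseries p) = (p : ℚ) ^ n * ((n.factorial : ℚ))⁻¹ := by
  rw [Eseries, coeff_Exp]
  have hterm : ∀ k ∈ Finset.range (n + 1),
      ((k.factorial : ℚ)⁻¹) * PowerSeries.coeff n ((PowerSeries.C (p:ℚ) * X) ^ k)
        = if n = k then (p : ℚ) ^ n * ((n.factorial : ℚ))⁻¹ else 0 := by
    intro k _
    rw [mul_pow, ← map_pow, PowerSeries.coeff_C_mul, PowerSeries.coeff_X_pow]
    by_cases h : n = k
    · subst h; simp [mul_comm]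
    · rw [if_neg h, mul_zero, mul_zero, if_neg h]
  rw [Finset.sum_congr rfl hterm, Finset.sum_ite_eq (Finset.range (n+1)) n
    (fun _ => (p : ℚ) ^ n * ((n.factorial : ℚ))⁻¹), if_pos (Finset.self_mem_range_succ n)]

variable {p : ℕ} (hp : p.Prime)
include hp

theorem functional_equation :
    (artinHasseSeries p) ^ p = Eseries p * expand p (artinHasseSeries p) := by
  have hp2 : 2 ≤ p := hp.two_le
  have hcc := arg_cc hp
  have hX : PowerSeries.constantCoeff (PowerSeries.C (p:ℚ) * X) = 0 := by
    simp
  rw [AH_eq_Exp, Exp_pow hcc p, PowerSeries.smul_eq_C_mul, arg_identity hp,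
    Exp_add hX (expand_constantCoeff hcc), expand_Exp hp2 hcc, Eseries]

end AH4

namespace AH5
open AHaux AH2 AH3 AH4

variable {p : ℕ} [hp : Fact p.Prime]

theorem padicValNat_factorial_lt {i : ℕ} (hi : 1 ≤ i) :
    padicValNat p (i.factorial) < i := by
  have key := sub_one_mul_padicValNat_factorial (p := p) i
  have hs : 1 ≤ (p.digits i).sum := by
    have hne : p.digits i ≠ [] := Nat.digits_ne_nil_iff_ne_zero.mpr (by omega)
    have hlast := Nat.getLast_digit_ne_zero p (show i ≠ 0 by omega)
    have hmem : (p.digits i).getLast hne ∈ p.digits i := List.getLast_mem hne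
    have := List.single_le_sum (fun x _ => Nat.zero_le x) _ hmem
    omega
  have hp2 : 2 ≤ p := hp.out.two_le
  have hv : padicValNat p (i.factorial) ≤ (p - 1) * padicValNat p (i.factorial) :=
    Nat.le_mul_of_pos_left _ (by omega)
  omega

theorem norm_coeff_E_le {i : ℕ} (hi : 1 ≤ i) :
    ‖((PowerSeries.coeff i (Eseries p) : ℚ) : ℚ_[p])‖ ≤ (p : ℝ)⁻¹ := by
  have hp2 : 2 ≤ p := hp.out.two_le
  have hfact : (i.factorial : ℚ) ≠ 0 := Nat.cast_ne_zero.2 i.factorial_ne_zero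
  rw [coeff_Eseries, Padic.eq_padicNorm]
  have hr : ((p : ℚ) ^ i * ((i.factorial : ℚ))⁻¹) ≠ 0 := by positivity
  have hval : padicValRat p ((p : ℚ) ^ i * ((i.factorial : ℚ))⁻¹)
      = (i : ℤ) - padicValNat p i.factorial := by
    rw [padicValRat.mul (by positivity) (by positivity),
      padicValRat.inv, padicValRat.pow _,
      padicValRat.self hp.out.one_lt, padicValRat.of_nat]
    ring
  have hvlt : (padicValNat p i.factorial : ℤ) < i := by
    exact_mod_cast padicValNat_factorial_lt (p := p) hi
  have hle : padicNorm p ((p : ℚ) ^ i * ((i.factorial : ℚ))⁻¹) ≤ (p : ℚ)⁻¹ := by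
    rw [padicNorm.eq_zpow_of_nonzero hr, hval, ← zpow_neg_one]
    exact zpow_le_zpow_right₀ (by exact_mod_cast (by omega : 1 ≤ p)) (by omega)
  calc ((padicNorm p ((p : ℚ) ^ i * ((i.factorial : ℚ))⁻¹) : ℚ) : ℝ)
      ≤ (((p : ℚ)⁻¹ : ℚ) : ℝ) := by exact_mod_cast hle
    _ = (p : ℝ)⁻¹ := by push_cast; ring

end AH5

namespace AH6

variable {p : ℕ} [hp : Fact p.Prime]

theorem frob_coeff (P : Polynomial ℚ_[p]) (hP : ∀ m, ‖P.coeff m‖ ≤ 1) (n : ℕ) :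
    ‖(P ^ p).coeff n - (Polynomial.expand ℚ_[p] p P).coeff n‖ ≤ (p : ℝ)⁻¹ := by
  classical
  -- lift P to ℤ_[p]
  set φ : ℤ_[p] →+* ℚ_[p] := PadicInt.Coe.ringHom with hφ
  set q : Polynomial ℤ_[p] :=
    ∑ i ∈ P.support, Polynomial.monomial i (⟨P.coeff i, hP i⟩ : ℤ_[p]) with hq
  have hmap : q.map φ = P := by
    rw [hq, Polynomial.map_sum]
    conv_rhs => rw [P.as_sum_support]
    refine Finset.sum_congr rfl fun i _ => ?_
    exact Polynomial.map_monomial _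
  have hkey : ((q ^ p - Polynomial.expand ℤ_[p] p q).map (PadicInt.toZMod (p := p))) = 0 := by
    rw [Polynomial.map_sub, Polynomial.map_pow, Polynomial.map_expand]
    have := Polynomial.map_frobenius_expand p (q.map (PadicInt.toZMod (p := p)))
    rw [ZMod.frobenius_zmod, Polynomial.map_id] at this
    rw [this, sub_self]
  set d : ℤ_[p] := (q ^ p - Polynomial.expand ℤ_[p] p q).coeff n with hd
  have hdvd : (p : ℤ_[p]) ∣ d := by
    have h0 : PadicInt.toZMod d = 0 := by
      have h2 := congrArg (fun f => Polynomial.coeff f n) hkey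
      simp only [Polynomial.coeff_zero] at h2
      rw [hd, ← Polynomial.coeff_map]
      exact h2
    have : d ∈ RingHom.ker (PadicInt.toZMod (p := p)) := h0
    rw [PadicInt.ker_toZMod, PadicInt.maximalIdeal_eq_span_p, Ideal.mem_span_singleton] at this
    exact this
  obtain ⟨e, he⟩ := hdvd
  have hnorm : ‖d‖ ≤ (p : ℝ)⁻¹ := by
    rw [he, norm_mul, PadicInt.norm_p]
    calc (p : ℝ)⁻¹ * ‖e‖ ≤ (p : ℝ)⁻¹ * 1 := by
          exact mul_le_mul_of_nonneg_left e.norm_le_one (by positivity)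
      _ = (p : ℝ)⁻¹ := mul_one _
  have hmap2 : ((q ^ p - Polynomial.expand ℤ_[p] p q).map φ)
      = P ^ p - Polynomial.expand ℚ_[p] p P := by
    rw [Polynomial.map_sub, Polynomial.map_pow, Polynomial.map_expand, hmap]
  have heq : (P ^ p).coeff n - (Polynomial.expand ℚ_[p] p P).coeff n = φ d := by
    rw [hd, ← Polynomial.coeff_map, hmap2, Polynomial.coeff_sub]
  rw [heq]
  calc ‖φ d‖ = ‖d‖ := (PadicInt.norm_def (z := d)).symm
    _ ≤ (p : ℝ)⁻¹ := hnorm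

end AH6

namespace AHmain
open AHaux AH2 AH3 AH4 AH5 AH6

variable {p : ℕ} [hp : Fact p.Prime]

theorem coeff_zero_AH : PowerSeries.coeff 0 (artinHasseSeries p) = 1 := by
  rw [AH_eq_Exp, coeff_Exp]
  simp

theorem main_norm (n : ℕ) :
    ‖((PowerSeries.coeff n (artinHasseSeries p) : ℚ) : ℚ_[p])‖ ≤ 1 := by
  induction n using Nat.strong_induction_on with
  | _ n IH =>
  rcases Nat.eq_zero_or_pos n with rfl | hn
  · rw [coeff_zero_AH]
    simp
  -- setup
  have hp2 : 2 ≤ p := hp.out.two_le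
  set F : PowerSeries ℚ := artinHasseSeries p with hF
  set Qp : Polynomial ℚ := PowerSeries.trunc n F with hQp
  set Q : PowerSeries ℚ := (Qp : PowerSeries ℚ) with hQ
  set H : PowerSeries ℚ := F - Q with hH
  have hQcoeff : ∀ m, PowerSeries.coeff m Q = if m < n then PowerSeries.coeff m F else 0 := by
    intro m
    rw [hQ, Polynomial.coeff_coe, hQp, PowerSeries.coeff_trunc]
  have hHlow : ∀ m, m < n → PowerSeries.coeff m H = 0 := by
    intro m hm
    rw [hH, map_sub, hQcoeff, if_pos hm, sub_self]
  have hHn : PowerSeries.coeff n H = PowerSeries.coeff n F := by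
    rw [hH, map_sub, hQcoeff, if_neg (lt_irrefl n), sub_zero]
  have hXH : (PowerSeries.X : PowerSeries ℚ) ^ n ∣ H :=
    PowerSeries.X_pow_dvd_iff.2 hHlow
  have hQ0 : PowerSeries.constantCoeff Q = 1 := by
    rw [← PowerSeries.coeff_zero_eq_constantCoeff_apply, hQcoeff, if_pos hn]
    exact coeff_zero_AH
  -- Step 1 : coeff n (F^p) = coeff n (Q^p) + p * coeff n F
  have hQH : PowerSeries.coeff n (Q ^ (p-1) * H) = PowerSeries.coeff n F := by
    rw [PowerSeries.coeff_mul]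
    rw [Finset.sum_eq_single (0, n)]
    · rw [PowerSeries.coeff_zero_eq_constantCoeff_apply, map_pow, hQ0, one_pow, one_mul, hHn]
    · rintro ⟨i, j⟩ hmem hne
      rw [Finset.HasAntidiagonal.mem_antidiagonal] at hmem
      have hj : j < n := by
        rcases Nat.lt_or_ge j n with h | h
        · exact h
        · exfalso; apply hne
          have : j = n := by omega
          subst this
          have : i = 0 := by omega
          subst this
          rfl
      rw [hHlow j hj, mul_zero]
    · intro hmem
      exact absurd (Finset.HasAntidiagonal.mem_antidiagonal.2 (by simp : ((0:ℕ),n).1 + ((0:ℕ),n).2 = n)) hmem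
  have step1 : PowerSeries.coeff n (F ^ p)
      = PowerSeries.coeff n (Q ^ p) + (p : ℚ) * PowerSeries.coeff n F := by
    have hFQH : F = Q + H := by rw [hH]; ring
    rw [hFQH, add_pow, map_sum]
    have hzero : ∀ k ∈ Finset.range (p + 1), k ∉ ({p - 1, p} : Finset ℕ) →
        PowerSeries.coeff n (Q ^ k * H ^ (p - k) * ((p.choose k : ℕ) : PowerSeries ℚ)) = 0 := by
      intro k hk hk2
      simp only [Finset.mem_insert, Finset.mem_singleton, Finset.mem_range] at hk hk2
      have h2 : 2 ≤ p - k := by omega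
      have hdvd : (PowerSeries.X : PowerSeries ℚ) ^ (n * (p - k))
          ∣ Q ^ k * H ^ (p - k) * ((p.choose k : ℕ) : PowerSeries ℚ) := by
        have h3 : (PowerSeries.X : PowerSeries ℚ) ^ (n * (p - k)) ∣ H ^ (p - k) := by
          rw [pow_mul]
          exact pow_dvd_pow_of_dvd hXH _
        exact (h3.mul_left _).mul_right _
      exact PowerSeries.X_pow_dvd_iff.1 hdvd n (by nlinarith)
    rw [← Finset.sum_subset (by
        intro k hk
        simp only [Finset.mem_insert, Finset.mem_singleton] at hk
        simp only [Finset.mem_range]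
        omega) hzero]
    rw [Finset.sum_insert (by simp only [Finset.mem_singleton]; omega), Finset.sum_singleton]
    have hterm2 : Q ^ p * H ^ (p - p) * ((p.choose p : ℕ) : PowerSeries ℚ) = Q ^ p := by
      rw [Nat.sub_self, pow_zero, Nat.choose_self, Nat.cast_one, mul_one, mul_one]
    have hchoose : p.choose (p - 1) = p := by
      rw [show p - 1 = p - 1 from rfl, Nat.choose_symm (by omega), Nat.choose_one_right]
    have hterm1 : PowerSeries.coeff n
        (Q ^ (p-1) * H ^ (p - (p-1)) * ((p.choose (p-1) : ℕ) : PowerSeries ℚ))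
          = (p : ℚ) * PowerSeries.coeff n F := by
      rw [show p - (p - 1) = 1 by omega, pow_one, hchoose,
        show ((p : ℕ) : PowerSeries ℚ) = PowerSeries.C (p : ℚ) from (map_natCast _ p).symm,
        PowerSeries.coeff_mul_C, hQH, mul_comm]
    rw [hterm1, hterm2, ← hFQH]
    ring
  -- Step 2/3 : the p-adic estimate
  have hfun := functional_equation hp.out
  have hmain : (p : ℚ) * PowerSeries.coeff n F
      = (∑ x ∈ (Finset.HasAntidiagonal.antidiagonal n).erase (0, n),
          PowerSeries.coeff x.1 (Eseries p) * PowerSeries.coeff x.2 (expand p F))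
        + ((Polynomial.expand ℚ p Qp).coeff n - (Qp ^ p).coeff n) := by
    have hsplit : PowerSeries.coeff n (Eseries p * expand p F)
        = (Polynomial.expand ℚ p Qp).coeff n
          + ∑ x ∈ (Finset.HasAntidiagonal.antidiagonal n).erase (0, n),
              PowerSeries.coeff x.1 (Eseries p) * PowerSeries.coeff x.2 (expand p F) := by
      rw [PowerSeries.coeff_mul,
        ← Finset.add_sum_erase _ _ (Finset.HasAntidiagonal.mem_antidiagonal.2 (by simp : ((0:ℕ),n).1 + ((0:ℕ),n).2 = n))]
      congr 1
      rw [coeff_Eseries, pow_zero, Nat.factorial_zero, Nat.cast_one, inv_one, mul_one, one_mul,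
        coeff_expand, Polynomial.coeff_expand (by omega : 0 < p)]
      by_cases hdvd : p ∣ n
      · rw [if_pos hdvd, if_pos hdvd, hQp, PowerSeries.coeff_trunc,
          if_pos (Nat.div_lt_self (by omega) (by omega))]
      · rw [if_neg hdvd, if_neg hdvd]
    have hQppow : PowerSeries.coeff n (Q ^ p) = (Qp ^ p).coeff n := by
      rw [hQ, ← Polynomial.coe_pow, Polynomial.coeff_coe]
    have := step1
    rw [hfun] at this
    rw [hsplit, hQppow] at this
    linarith
  -- cast to ℚ_[p]
  have hcast := congrArg (fun q : ℚ => (q : ℚ_[p])) hmain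
  simp only [Rat.cast_mul, Rat.cast_add, Rat.cast_sub, Rat.cast_sum, Rat.cast_natCast] at hcast
  set P : Polynomial ℚ_[p] := Qp.map (Rat.castHom ℚ_[p]) with hP
  have hPcoeff : ∀ m, P.coeff m
      = ((if m < n then PowerSeries.coeff m F else 0 : ℚ) : ℚ_[p]) := by
    intro m
    rw [hP, Polynomial.coeff_map, hQp, PowerSeries.coeff_trunc]
    rfl
  have hPnorm : ∀ m, ‖P.coeff m‖ ≤ 1 := by
    intro m
    rw [hPcoeff]
    by_cases hm : m < n
    · rw [if_pos hm]; exact IH m hm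
    · rw [if_neg hm]; simp
  have hcast2 : ((((Polynomial.expand ℚ p Qp).coeff n : ℚ)) : ℚ_[p])
      = (Polynomial.expand ℚ_[p] p P).coeff n := by
    rw [hP, ← Polynomial.map_expand, Polynomial.coeff_map]
    rfl
  have hcast3 : (((Qp ^ p).coeff n : ℚ) : ℚ_[p]) = (P ^ p).coeff n := by
    rw [hP, ← Polynomial.map_pow, Polynomial.coeff_map]
    rfl
  -- norm bound on the sum
  have hsumbound : ‖∑ x ∈ (Finset.HasAntidiagonal.antidiagonal n).erase (0, n),
      ((PowerSeries.coeff x.1 (Eseries p) : ℚ) : ℚ_[p])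
        * ((PowerSeries.coeff x.2 (expand p F) : ℚ) : ℚ_[p])‖
        ≤ (p : ℝ)⁻¹ := by
    refine IsUltrametricDist.norm_sum_le_of_forall_le_of_nonneg (by positivity) ?_
    rintro ⟨i, j⟩ hx
    have hmem := Finset.mem_of_mem_erase hx
    rw [Finset.HasAntidiagonal.mem_antidiagonal] at hmem
    have hne := Finset.ne_of_mem_erase hx
    have hi : 1 ≤ i := by
      rcases Nat.eq_zero_or_pos i with rfl | h
      · exfalso; apply hne
        have : j = n := by omega
        subst this; rfl
      · exact h
    rw [norm_mul]
    have h1 : ‖((PowerSeries.coeff i (Eseries p) : ℚ) : ℚ_[p])‖ ≤ (p : ℝ)⁻¹ :=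
      norm_coeff_E_le hi
    have h2 : ‖((PowerSeries.coeff j (expand p F) : ℚ) : ℚ_[p])‖ ≤ 1 := by
      rw [coeff_expand]
      by_cases hdvd : p ∣ j
      · rw [if_pos hdvd]
        exact IH (j / p) (lt_of_le_of_lt (Nat.div_le_self j p) (by omega))
      · rw [if_neg hdvd]; simp
    calc ‖((PowerSeries.coeff i (Eseries p) : ℚ) : ℚ_[p])‖
          * ‖((PowerSeries.coeff j (expand p F) : ℚ) : ℚ_[p])‖
        ≤ (p : ℝ)⁻¹ * 1 := mul_le_mul h1 h2 (norm_nonneg _) (by positivity)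
      _ = (p : ℝ)⁻¹ := mul_one _
  -- norm bound on the polynomial difference
  have hpoly : ‖(Polynomial.expand ℚ_[p] p P).coeff n - (P ^ p).coeff n‖ ≤ (p : ℝ)⁻¹ := by
    rw [norm_sub_rev]
    exact frob_coeff P hPnorm n
  -- combine
  have hLHS : ‖((p : ℚ_[p])) * ((PowerSeries.coeff n F : ℚ) : ℚ_[p])‖
      = (p : ℝ)⁻¹ * ‖((PowerSeries.coeff n F : ℚ) : ℚ_[p])‖ := by
    rw [norm_mul, Padic.norm_p]
  have hRHS : ‖((p : ℚ_[p])) * ((PowerSeries.coeff n F : ℚ) : ℚ_[p])‖ ≤ (p : ℝ)⁻¹ := by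
    rw [hcast]
    refine le_trans (IsUltrametricDist.norm_add_le_max _ _) (max_le ?_ ?_)
    · exact hsumbound
    · rw [hcast2, hcast3]
      exact hpoly
  rw [hLHS] at hRHS
  have hppos : (0 : ℝ) < (p : ℝ)⁻¹ := by positivity
  exact (mul_le_mul_iff_right₀ hppos).1 (by rwa [mul_one])

end AHmain

/-- every coefficient of the Artin–Hasse series `F(t) = exp(∑ t^(p^i)/p^i)`
lies in `ℤ_(p)`, i.e. is a rational number with nonnegative `p`-adic valuation. -/
theorem stmt2 (p : ℕ) (hp : p.Prime) (n : ℕ) :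
    0 ≤ padicValRat p (PowerSeries.coeff n (artinHasseSeries p)) := by
  haveI : Fact p.Prime := ⟨hp⟩
  by_cases h : PowerSeries.coeff n (artinHasseSeries p) = 0
  · rw [h]
    simp
  · have key := AHmain.main_norm (p := p) n
    rw [Padic.eq_padicNorm, padicNorm.eq_zpow_of_nonzero h] at key
    by_contra hneg
    push_neg at hneg
    have h1 : (1 : ℚ) < (p : ℚ) ^ (-(padicValRat p (PowerSeries.coeff n (artinHasseSeries p)))) := by
      refine one_lt_zpow₀ ?_ ?_
      · exact_mod_cast hp.one_lt
      · omega
    have h2 : ((1:ℚ) : ℝ) < (((p : ℚ) ^ (-(padicValRat p (PowerSeries.coeff n (artinHasseSeries p)))) : ℚ) : ℝ) := by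
      exact_mod_cast h1
    rw [Rat.cast_one] at h2
    linarith
end

section
/- Let p be a prime, n ≥ 1 an integer, Λ a commutative ℚ-algebra, A an associative unital Λ-algebra, and X ∈ A a nilpotent element with X^{p^n} = 0. For a nilpotent element a ∈ A, define exp(a) = ∑_{k ≥ 0} a^k/k! (a finite sum) and F(a) = exp(∑_{i ≥ 0} a^{p^i}/p^i) (the Artin–Hasse exponential evaluated at the nilpotent element a; the inner sum is finite). Then for all t_0, …, t_{n−1} ∈ Λ: exp( ∑_{j=0}^{n−1} p^{−j} w_j(t_0,…,t_j) X^{p^j} ) = ∏_{m=0}^{n−1} F(t_m · X^{p^m}), where w_j(t_0,…,t_j) = ∑_{m=0}^{j} p^m t_m^{p^{j−m}} is the j-th ghost (Witt) polynomial. (The factors on the right pairwise commute, being polynomials in X.) -/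
/-- The exponential `exp(a) = ∑_{k ≥ 0} a^k / k!` of a nilpotent element `a` of a
`ℚ`-algebra, truncated at `N`; when `a ^ N = 0` the omitted terms vanish, so this is the
full (finite) exponential sum. -/
noncomputable def expNil {A : Type*} [Ring A] [Algebra ℚ A] (N : ℕ) (a : A) : A :=
  ∑ k ∈ Finset.range N, (k.factorial : ℚ)⁻¹ • a ^ k

/-- The Artin–Hasse exponential `F(a) = exp(∑_{i ≥ 0} a^(p^i) / p^i)` of a nilpotent
element `a` with `a ^ (p ^ n) = 0`: the inner sum is truncated at `i < n` (the remaining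
terms vanish), and the exponential sum is truncated at `p ^ n` (again the remaining terms
vanish). -/
noncomputable def artinHasseNil {A : Type*} [Ring A] [Algebra ℚ A] (p n : ℕ) (a : A) : A :=
  expNil (p ^ n) (∑ i ∈ Finset.range n, ((p : ℚ) ^ i)⁻¹ • a ^ p ^ i)


lemma expNil_zero {A : Type*} [Ring A] [Algebra ℚ A] {N : ℕ} (hN : 0 < N) :
    expNil N (0 : A) = 1 := by
  unfold expNil
  rw [Finset.sum_eq_single 0]
  · simp
  · intro k _ hk; simp [zero_pow hk]
  · intro h; exact absurd (Finset.mem_range.mpr hN) h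

lemma expNil_add {A : Type*} [Ring A] [Algebra ℚ A] (N : ℕ) (a b : A)
    (hc : Commute a b) (h : ∀ i j, i + j = N → a ^ i * b ^ j = 0) :
    expNil N (a + b) = expNil N a * expNil N b := by
  have h' : ∀ i j, N ≤ i + j → a ^ i * b ^ j = 0 := by
    intro i j hij
    rcases le_or_gt N i with hi | hi
    · have : a ^ i = a ^ N * a ^ (i - N) := by rw [← pow_add]; congr 1; omega
      rw [this]
      have haN : a ^ N = 0 := by simpa using h N 0 (by omega)
      simp [haN]
    · have hj : j = (N - i) + (j - (N - i)) := by omega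
      rw [hj, pow_add, ← mul_assoc, h i (N - i) (by omega), zero_mul]
  have hrhs : expNil N a * expNil N b =
      ∑ x ∈ (Finset.range N ×ˢ Finset.range N).filter (fun x => x.1 + x.2 < N),
        ((x.1.factorial : ℚ)⁻¹ * (x.2.factorial : ℚ)⁻¹) • (a ^ x.1 * b ^ x.2) := by
    rw [expNil, expNil, Finset.sum_mul_sum, ← Finset.sum_product']
    rw [← Finset.sum_filter_add_sum_filter_not (Finset.range N ×ˢ Finset.range N)
      (fun x => x.1 + x.2 < N)]
    have : ∑ x ∈ (Finset.range N ×ˢ Finset.range N).filter (fun x => ¬ x.1 + x.2 < N),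
        ((x.1.factorial : ℚ)⁻¹ • a ^ x.1) * ((x.2.factorial : ℚ)⁻¹ • b ^ x.2) = 0 := by
      apply Finset.sum_eq_zero
      intro x hx
      simp only [Finset.mem_filter, not_lt] at hx
      rw [smul_mul_smul_comm, h' _ _ hx.2, smul_zero]
    rw [this, add_zero]
    apply Finset.sum_congr rfl
    intro x _
    rw [smul_mul_smul_comm]
  rw [hrhs, expNil]
  have hlhs : ∀ k, ((k.factorial : ℚ)⁻¹ • (a + b) ^ k)
      = ∑ i ∈ Finset.range (k + 1),
          ((i.factorial : ℚ)⁻¹ * ((k - i).factorial : ℚ)⁻¹) • (a ^ i * b ^ (k - i)) := by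
    intro k
    rw [hc.add_pow, Finset.smul_sum]
    apply Finset.sum_congr rfl
    intro i hi
    rw [Finset.mem_range] at hi
    have hik : i ≤ k := by omega
    have hcoef : (k.factorial : ℚ)⁻¹ * (k.choose i : ℚ) =
        (i.factorial : ℚ)⁻¹ * ((k - i).factorial : ℚ)⁻¹ := by
      have := Nat.choose_mul_factorial_mul_factorial hik
      have hq : (k.choose i : ℚ) * (i.factorial : ℚ) * ((k - i).factorial : ℚ)
          = (k.factorial : ℚ) := by exact_mod_cast congrArg (Nat.cast : ℕ → ℚ) this
      field_simp
      linarith [hq]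
    have hx : a ^ i * b ^ (k - i) * (k.choose i : A) =
        ((k.choose i : ℚ)) • (a ^ i * b ^ (k - i)) := by
      rw [(Nat.commute_cast _ _).eq, ← nsmul_eq_mul, Nat.cast_smul_eq_nsmul ℚ]
    push_cast
    rw [hx, smul_smul, hcoef]
  simp_rw [hlhs]
  rw [Finset.sum_sigma']
  apply Finset.sum_nbij' (fun x => (x.2, x.1 - x.2)) (fun x => ⟨x.1 + x.2, x.1⟩)
  · rintro ⟨k, i⟩ hk
    simp only [Finset.mem_sigma, Finset.mem_range] at hk
    simp only [Finset.mem_filter, Finset.mem_product, Finset.mem_range]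
    omega
  · rintro ⟨i, j⟩ hij
    simp only [Finset.mem_filter, Finset.mem_product, Finset.mem_range] at hij
    simp only [Finset.mem_sigma, Finset.mem_range]
    omega
  · rintro ⟨k, i⟩ hk
    simp only [Finset.mem_sigma, Finset.mem_range] at hk
    simp only [Sigma.mk.inj_iff]
    constructor
    · omega
    · rfl
  · rintro ⟨i, j⟩ hij
    dsimp only
    rw [Prod.mk.injEq]
    omega
  · rintro ⟨k, i⟩ hk
    rfl

lemma aux_zero {A : Type*} [Ring A] {N : ℕ} (X c d : A) (hN : X ^ N = 0)
    (hXc : Commute X c) (hXd : Commute X d) (i j : ℕ) (hij : i + j = N) :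
    (X * c) ^ i * (X * d) ^ j = 0 := by
  rw [hXc.mul_pow, hXd.mul_pow, mul_assoc, ← mul_assoc (c ^ i),
    ((hXc.symm.pow_pow i j)).eq, mul_assoc, ← mul_assoc, ← pow_add, hij, hN, zero_mul]

lemma expNil_list {A : Type*} [Ring A] [Algebra ℚ A] (N : ℕ) (hN : 0 < N)
    (X : A) (hXN : X ^ N = 0) (g : ℕ → A) (hXg : ∀ m, Commute X (g m))
    (hgg : ∀ m k, Commute (g m) (g k)) :
    ∀ l : List ℕ, expNil N ((l.map fun m => X * g m).sum)
      = (l.map fun m => expNil N (X * g m)).prod := by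
  intro l
  induction l with
  | nil => simpa using expNil_zero hN
  | cons m l ih =>
    have hsum : ((l.map fun m => X * g m)).sum = X * (l.map g).sum := by
      rw [← List.sum_map_mul_left]
    have hXG : Commute X (l.map g).sum :=
      Commute.list_sum_right _ _ (by intro y hy; obtain ⟨k, _, rfl⟩ := List.mem_map.mp hy; exact hXg k)
    have hgG : Commute (g m) (l.map g).sum :=
      Commute.list_sum_right _ _ (by intro y hy; obtain ⟨k, _, rfl⟩ := List.mem_map.mp hy; exact hgg m k)
    rw [List.map_cons, List.sum_cons, List.map_cons, List.prod_cons, hsum, ← ih, hsum]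
    exact expNil_add N _ _
      (Commute.mul_left ((Commute.refl X).mul_right hXG) ((hXg m).symm.mul_right hgG))
      (aux_zero X (g m) _ hXN (hXg m) hXG)

lemma list_range_sum {A : Type*} [AddCommMonoid A] (f : ℕ → A) (n : ℕ) :
    ((List.range n).map f).sum = ∑ m ∈ Finset.range n, f m := by
  induction n with
  | zero => simp
  | succ n ih => simp [List.range_succ, Finset.sum_range_succ, ih]


/-- for a prime `p`, `n ≥ 1`, a commutative `ℚ`-algebra `Λ`, an associative
unital `Λ`-algebra `A`, a nilpotent `X ∈ A` with `X^(p^n) = 0`, and `t_0, …, t_{n-1} ∈ Λ`: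
`exp(∑_{j=0}^{n-1} p^{-j} w_j(t_0,…,t_j) X^(p^j)) = ∏_{m=0}^{n-1} F(t_m · X^(p^m))`,
where `w_j` is the `j`-th ghost (Witt) polynomial and `F` is the Artin–Hasse exponential
of a nilpotent element.  The product on the right is taken in the order `m = 0, 1, …, n-1`
(the factors pairwise commute, being polynomials in `X`). -/
theorem stmt5 (p : ℕ) (hp : p.Prime) (n : ℕ) (hn : 1 ≤ n)
    (Λ : Type*) [CommRing Λ] [Algebra ℚ Λ]
    (A : Type*) [Ring A] [Algebra ℚ A] [Algebra Λ A] [IsScalarTower ℚ Λ A]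
    (X : A) (hX : X ^ p ^ n = 0) (t : ℕ → Λ) :
    expNil (p ^ n)
        (∑ j ∈ Finset.range n, ((p : ℚ) ^ j)⁻¹ •
          (algebraMap Λ A (∑ m ∈ Finset.range (j + 1), (p : Λ) ^ m * t m ^ p ^ (j - m))
            * X ^ p ^ j))
      = ((List.range n).map fun m =>
          artinHasseNil p n (algebraMap Λ A (t m) * X ^ p ^ m)).prod := by
  have hppos : 0 < p := hp.pos
  have hpQ : (p : ℚ) ≠ 0 := Nat.cast_ne_zero.mpr hp.ne_zero
  have hN : 0 < p ^ n := Nat.pow_pos (n := n) hppos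
  -- the argument of the m-th Artin–Hasse factor
  set f : ℕ → A := fun m =>
    ∑ i ∈ Finset.range n, ((p : ℚ) ^ i)⁻¹ • (algebraMap Λ A (t m) * X ^ p ^ m) ^ p ^ i
    with hfdef
  set g : ℕ → A := fun m =>
    ∑ i ∈ Finset.range n,
      ((p : ℚ) ^ i)⁻¹ • (algebraMap Λ A (t m ^ p ^ i) * X ^ (p ^ (m + i) - 1))
    with hgdef
  -- basic power computation
  have hpow : ∀ m i : ℕ, (algebraMap Λ A (t m) * X ^ p ^ m) ^ p ^ i
      = algebraMap Λ A (t m ^ p ^ i) * X ^ p ^ (m + i) := by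
    intro m i
    rw [(Algebra.commute_algebraMap_left (t m) (X ^ p ^ m)).mul_pow, ← map_pow,
      ← pow_mul, ← pow_add]
  -- f m = X * g m
  have hfg : ∀ m, f m = X * g m := by
    intro m
    rw [hfdef, hgdef]
    simp only
    rw [Finset.mul_sum]
    apply Finset.sum_congr rfl
    intro i _
    rw [hpow, mul_smul_comm]
    congr 1
    have h1 : 1 ≤ p ^ (m + i) := Nat.one_le_pow _ _ hppos
    calc algebraMap Λ A (t m ^ p ^ i) * X ^ p ^ (m + i)
        = algebraMap Λ A (t m ^ p ^ i) * (X * X ^ (p ^ (m + i) - 1)) := by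
          rw [← pow_succ']; congr 2; omega
      _ = (algebraMap Λ A (t m ^ p ^ i) * X) * X ^ (p ^ (m + i) - 1) := by rw [mul_assoc]
      _ = (X * algebraMap Λ A (t m ^ p ^ i)) * X ^ (p ^ (m + i) - 1) := by
          rw [Algebra.commutes]
      _ = X * (algebraMap Λ A (t m ^ p ^ i) * X ^ (p ^ (m + i) - 1)) := by rw [mul_assoc]
  -- commutation facts
  have hXg : ∀ m, Commute X (g m) := by
    intro m
    apply Commute.sum_right
    intro i _
    exact ((Algebra.commute_algebraMap_right _ X).mul_right
      ((Commute.refl X).pow_right _)).smul_right _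
  have hgg : ∀ m k, Commute (g m) (g k) := by
    intro m k
    apply Commute.sum_right
    intro i _
    apply Commute.sum_left
    intro i' _
    apply Commute.smul_right
    apply Commute.smul_left
    exact Commute.mul_left
      (Algebra.commute_algebraMap_left _ _)
      ((Algebra.commute_algebraMap_right _ _).mul_right
        (((Commute.refl X).pow_pow _ _)))
  -- the summand reindexed
  set F : ℕ → ℕ → A := fun m j =>
    ((p : ℚ) ^ (j - m))⁻¹ • (algebraMap Λ A (t m ^ p ^ (j - m)) * X ^ p ^ j) with hFdef
  -- step A: the LHS argument equals the triangular double sum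
  have stepA : (∑ j ∈ Finset.range n, ((p : ℚ) ^ j)⁻¹ •
        (algebraMap Λ A (∑ m ∈ Finset.range (j + 1), (p : Λ) ^ m * t m ^ p ^ (j - m))
          * X ^ p ^ j))
      = ∑ j ∈ Finset.range n, ∑ m ∈ Finset.range (j + 1), F m j := by
    apply Finset.sum_congr rfl
    intro j _
    rw [map_sum, Finset.sum_mul, Finset.smul_sum]
    apply Finset.sum_congr rfl
    intro m hm
    rw [Finset.mem_range] at hm
    have hmj : m ≤ j := by omega
    rw [hFdef]
    simp only
    rw [map_mul, map_pow, map_natCast]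
    have hcast : ((p : A)) ^ m * (algebraMap Λ A (t m ^ p ^ (j - m)) * X ^ p ^ j)
        = ((p : ℚ) ^ m) • (algebraMap Λ A (t m ^ p ^ (j - m)) * X ^ p ^ j) := by
      rw [Algebra.smul_def]
      push_cast
      rfl
    rw [mul_assoc, hcast, smul_smul]
    congr 1
    have : (p : ℚ) ^ j = (p : ℚ) ^ m * (p : ℚ) ^ (j - m) := by
      rw [← pow_add]; congr 1; omega
    rw [this, mul_inv_rev, mul_assoc, inv_mul_cancel₀ (pow_ne_zero m hpQ), mul_one]
  have stepB : ∑ j ∈ Finset.range n, ∑ m ∈ Finset.range (j + 1), F m j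
      = ∑ m ∈ Finset.range n, ∑ j ∈ Finset.Ico m n, F m j := by
    simp_rw [Finset.range_eq_Ico]
    exact (Finset.sum_Ico_Ico_comm 0 n F).symm
  have stepC : ∀ m ∈ Finset.range n, ∑ j ∈ Finset.Ico m n, F m j = f m := by
    intro m hm
    rw [Finset.mem_range] at hm
    rw [Finset.sum_Ico_eq_sum_range]
    have hf' : f m = ∑ i ∈ Finset.range (n - m),
        ((p : ℚ) ^ i)⁻¹ • (algebraMap Λ A (t m ^ p ^ i) * X ^ p ^ (m + i)) := by
      rw [hfdef]
      simp only
      simp_rw [hpow]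
      symm
      apply Finset.sum_subset (Finset.range_subset_range.mpr (by omega))
      intro i hi hni
      rw [Finset.mem_range] at hi hni
      have hz : X ^ p ^ (m + i) = 0 :=
        pow_eq_zero_of_le (Nat.pow_le_pow_right hppos (by omega)) hX
      rw [hz, mul_zero, smul_zero]
    rw [hf']
    apply Finset.sum_congr rfl
    intro i _
    rw [hFdef]
    simp only
    rw [Nat.add_sub_cancel_left]
  have harg : (∑ j ∈ Finset.range n, ((p : ℚ) ^ j)⁻¹ •
        (algebraMap Λ A (∑ m ∈ Finset.range (j + 1), (p : Λ) ^ m * t m ^ p ^ (j - m))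
          * X ^ p ^ j))
      = ((List.range n).map fun m => X * g m).sum := by
    rw [stepA, stepB, list_range_sum]
    apply Finset.sum_congr rfl
    intro m hm
    rw [stepC m hm, hfg m]
  rw [harg, expNil_list (p ^ n) hN X hX g hXg hgg]
  congr 1
  apply List.map_congr_left
  intro m _
  rw [← hfg m, hfdef]
  simp only [artinHasseNil]
end

section
/- Let G and H be topological groups with G commutative, connected, and T1, and let φ: G → H be a surjective continuous group homomorphism whose kernel is finite. Then G and H have the same exponent: for a positive integer m, every element h ∈ H satisfies h^m = 1 if and only if every element g ∈ G satisfies g^m = 1. In particular, if every h ∈ H satisfies h^m = 1, then g^m = 1 for all g ∈ G. -/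
lemma finite_connected_subsingleton {X : Type*} [TopologicalSpace X] [T1Space X]
    {s : Set X} (hfin : s.Finite) (hconn : IsPreconnected s) : s.Subsingleton := by
  intro a ha b hb
  by_contra hab
  have h1 : IsClosed ({a} : Set X) := isClosed_singleton
  have h2 : IsClosed (s \ {a}) := (hfin.diff : (s \ {a}).Finite).isClosed
  have := hconn ({a} : Set X)ᶜ (s \ {a})ᶜ h1.isOpen_compl h2.isOpen_compl
    (fun x hx => by
      by_cases hxa : x = a
      · exact Or.inr (by simp [hxa])
      · exact Or.inl (by simp [hxa]))
    ⟨b, hb, by simp [Ne.symm hab]⟩ ⟨a, ha, by simp⟩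
  obtain ⟨x, hxs, hx1, hx2⟩ := this
  simp at hx1 hx2
  exact hx1 (hx2 hxs)

/-- let `G` and `H` be topological groups with `G` commutative, connected and
T1, and let `φ : G → H` be a surjective continuous group homomorphism with finite kernel.
Then for every positive integer `m`, all elements of `H` have `m`-th power trivial iff all
elements of `G` do; in particular, if `h ^ m = 1` for all `h ∈ H`, then `g ^ m = 1` for
all `g ∈ G`. -/
theorem stmt8 {G H : Type*}
    [CommGroup G] [TopologicalSpace G] [IsTopologicalGroup G] [ConnectedSpace G] [T1Space G]
    [Group H] [TopologicalSpace H] [IsTopologicalGroup H]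
    (φ : G →* H) (hcont : Continuous φ) (hsurj : Function.Surjective φ)
    (hker : (φ.ker : Set G).Finite)
    (m : ℕ) (hm : 0 < m) :
    (∀ h : H, h ^ m = 1) ↔ (∀ g : G, g ^ m = 1) := by
  constructor
  · intro hH g
    -- the continuous map g ↦ g^m lands in the finite kernel
    set f : G → G := fun g => g ^ m with hf
    have hfc : Continuous f := continuous_pow m
    have hrange : Set.range f ⊆ (φ.ker : Set G) := by
      rintro _ ⟨x, rfl⟩
      simp only [SetLike.mem_coe, MonoidHom.mem_ker, hf, map_pow]
      exact hH (φ x)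
    have hconn : IsPreconnected (Set.range f) :=
      (isPreconnected_range hfc)
    have hsub : (Set.range f).Subsingleton :=
      finite_connected_subsingleton (hker.subset hrange) hconn
    have h1 : f 1 = 1 := by simp [hf]
    have := hsub ⟨g, rfl⟩ ⟨1, rfl⟩
    simpa [hf] using this.trans h1
  · intro hG h
    obtain ⟨g, rfl⟩ := hsurj h
    rw [← map_pow, hG g, map_one]
end

section
/- Let A be a discrete valuation ring with fraction field F and residue field k, and let L be a finite free A-module equipped with a direct sum decomposition L = ⨁_{i=0}^{d} L_{2i} into A-submodules, with L_0 ≠ 0 and L_{2d} ≠ 0; set L^+ = ⨁_{i=1}^{d} L_{2i}. Let ψ ∈ End_A(L) be an A-linear endomorphism of degree 2, i.e. ψ(L_{2i}) ⊆ L_{2i+2} for all i (so that ψ(L_{2d}) = 0 and ψ^{d+1} = 0). Suppose that the induced F-linear map ψ_F : L ⊗_A F → L^+ ⊗_A F is surjective, and that dim_k ker(ψ_k) = dim_F ker(ψ_F), where ψ_k is the induced k-linear endomorphism of L ⊗_A k. Then ψ : L → L^+ is surjective; in particular ψ_k^d ≠ 0, so the nilpotence degree of ψ_k equals d + 1 (the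 same as that of ψ_F). -/
open TensorProduct

theorem aux_range_baseChange {R B M N : Type*} [CommRing R] [CommRing B] [Algebra R B]
    [AddCommGroup M] [Module R M] [AddCommGroup N] [Module R N] (f : M →ₗ[R] N) :
    LinearMap.range (f.baseChange B) = (LinearMap.range f).baseChange B := by
  apply le_antisymm
  · rintro _ ⟨y, rfl⟩
    induction y using TensorProduct.induction_on with
    | zero => simp
    | tmul b m => simpa using Submodule.tmul_mem_baseChange_of_mem b (LinearMap.mem_range_self f m)
    | add x y hx hy => rw [map_add]; exact Submodule.add_mem _ hx hy
  · rw [Submodule.baseChange_eq_span, Submodule.span_le]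
    rintro _ ⟨_, ⟨m, rfl⟩, rfl⟩
    exact ⟨1 ⊗ₜ m, by simp⟩

theorem aux_baseChange_mono {R B M : Type*} [CommRing R] [CommRing B] [Algebra R B]
    [AddCommGroup M] [Module R M] {N N' : Submodule R M} (h : N ≤ N') :
    N.baseChange B ≤ N'.baseChange B := by
  rw [Submodule.baseChange_eq_span, Submodule.baseChange_eq_span]
  exact Submodule.span_mono (Submodule.map_mono h)

theorem aux_tmul_eq_zero {R M : Type*} [CommRing R] [AddCommGroup M] [Module R M]
    (I : Ideal R) (x : M) :
    (1 : R ⧸ I) ⊗ₜ[R] x = (0 : (R ⧸ I) ⊗[R] M) ↔ x ∈ I • (⊤ : Submodule R M) := by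
  rw [← (quotTensorEquivQuotSMul M I).injective.eq_iff, map_zero,
    show (1 : R ⧸ I) = Ideal.Quotient.mk I 1 from rfl, quotTensorEquivQuotSMul_mk_tmul,
    one_smul, Submodule.Quotient.mk_eq_zero]

theorem aux_inf_smul_le {R L : Type*} [CommRing R] [AddCommGroup L] [Module R L]
    {N N' : Submodule R L} (h : IsCompl N N') (I : Ideal R) :
    N ⊓ (I • ⊤ : Submodule R L) ≤ I • N := by
  rintro x ⟨hxN, hxI⟩
  have h1 : (Submodule.linearProjOfIsCompl N N' h) x = ⟨x, hxN⟩ :=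
    Submodule.linearProjOfIsCompl_apply_left h ⟨x, hxN⟩
  have h2 : (Submodule.linearProjOfIsCompl N N' h) x ∈ (I • ⊤ : Submodule R N) := by
    have : (Submodule.linearProjOfIsCompl N N' h) x ∈
        Submodule.map (Submodule.linearProjOfIsCompl N N' h) (I • ⊤ : Submodule R L) :=
      ⟨x, hxI, rfl⟩
    rw [Submodule.map_smul''] at this
    exact smul_mono_right I
      (le_top : Submodule.map (Submodule.linearProjOfIsCompl N N' h) ⊤ ≤ ⊤) this
  have h3 : x ∈ Submodule.map N.subtype (I • ⊤ : Submodule R N) :=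
    ⟨_, h2, by rw [h1]; rfl⟩
  rwa [Submodule.map_smul'', Submodule.map_subtype_top] at h3

/-- let `A` be a DVR with fraction field `F` and residue field `k`, and let
`L` be a finite free `A`-module with an internal direct sum decomposition
`L = ⨁_{i=0}^{d} L_{2i}` (indexed here by `i = 0, …, d`, with `Lc i = ⊥` for `i > d`),
`L_0 ≠ 0` and `L_{2d} ≠ 0`; set `L⁺ = ⨁_{i=1}^{d} L_{2i}`.  Let `ψ` be an `A`-linear
endomorphism of `L` of degree `2`, i.e. `ψ(L_{2i}) ⊆ L_{2i+2}` for all `i` (so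
`ψ(L_{2d}) = 0` and `ψ^{d+1} = 0`).  If the induced map `ψ_F : L ⊗ F → L⁺ ⊗ F` is
surjective and `dim_k ker ψ_k = dim_F ker ψ_F`, then `ψ : L → L⁺` is surjective; in
particular `ψ_k ^ d ≠ 0`, so the nilpotence degree of `ψ_k` is `d + 1`. -/
theorem stmt9 (A : Type*) [CommRing A] [IsDomain A] [IsDiscreteValuationRing A]
    (F : Type*) [Field F] [Algebra A F] [IsFractionRing A F]
    (L : Type*) [AddCommGroup L] [Module A L] [Module.Finite A L] [Module.Free A L]
    (d : ℕ) (Lc : ℕ → Submodule A L)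
    (hinternal : DirectSum.IsInternal Lc)
    (hbdd : ∀ i, d < i → Lc i = ⊥)
    (h0 : Lc 0 ≠ ⊥) (hd : Lc d ≠ ⊥)
    (ψ : L →ₗ[A] L)
    (hdeg : ∀ i, Submodule.map ψ (Lc i) ≤ Lc (i + 1))
    (hsurjF : LinearMap.range (ψ.baseChange F)
        = Submodule.baseChange F (⨆ i, ⨆ _ : 1 ≤ i, Lc i))
    (hker : Module.finrank (IsLocalRing.ResidueField A)
          (LinearMap.ker (ψ.baseChange (IsLocalRing.ResidueField A)))
        = Module.finrank F (LinearMap.ker (ψ.baseChange F))) :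
    LinearMap.range ψ = (⨆ i, ⨆ _ : 1 ≤ i, Lc i)
      ∧ (ψ.baseChange (IsLocalRing.ResidueField A)) ^ d ≠ 0 := by
  classical
  have htop : (⨆ i, Lc i) = ⊤ := hinternal.submodule_iSup_eq_top
  set p : Submodule A L := ⨆ i, ⨆ _ : 1 ≤ i, Lc i with hpdef
  have hLcle : ∀ i, 1 ≤ i → Lc i ≤ p := fun i hi => le_iSup_of_le i (le_iSup_of_le hi le_rfl)
  have hle : LinearMap.range ψ ≤ p := by
    rw [← Submodule.map_top, ← htop, Submodule.map_iSup]
    exact iSup_le fun i => (hdeg i).trans (hLcle (i+1) (Nat.succ_le_succ (Nat.zero_le i)))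
  haveI : IsNoetherian A L := isNoetherian_of_isNoetherianRing_of_finite A L
  haveI hfp : Module.Finite A p := Module.Finite.iff_fg.mpr (IsNoetherian.noetherian p)
  haveI : Module.Free A p := Module.free_of_finite_type_torsion_free'
  have hindep := hinternal.submodule_iSupIndep
  have hcompl : IsCompl p (Lc 0) := by
    constructor
    · refine Disjoint.symm ((hindep 0).mono_right ?_)
      exact iSup_le fun i => iSup_le fun hi =>
        le_iSup_of_le i (le_iSup_of_le (Nat.one_le_iff_ne_zero.mp hi) le_rfl)
    · rw [codisjoint_iff, ← top_le_iff, ← htop]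
      refine iSup_le fun i => ?_
      rcases Nat.eq_zero_or_pos i with h | h
      · subst h; exact le_sup_right
      · exact le_sup_of_le_left (hLcle i h)
  haveI : Module.Flat A F := IsLocalization.flat F (nonZeroDivisors A)
  have hinj : Function.Injective ((Submodule.subtype p).baseChange F) := by
    have h := Module.Flat.lTensor_preserves_injective_linearMap (M := F) p.subtype
      p.injective_subtype
    rwa [← LinearMap.baseChange_eq_ltensor] at h
  have hbcpF : p.baseChange F = LinearMap.range ((Submodule.subtype p).baseChange F) := by
    rw [aux_range_baseChange, Submodule.range_subtype]
  have hbcpK : p.baseChange (IsLocalRing.ResidueField A) = LinearMap.range ((Submodule.subtype p).baseChange (IsLocalRing.ResidueField A)) := by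
    rw [aux_range_baseChange, Submodule.range_subtype]
  have hrF : Module.finrank F (LinearMap.range (ψ.baseChange F)) = Module.finrank A p := by
    rw [hsurjF, hbcpF, LinearMap.finrank_range_of_inj hinj, Module.finrank_baseChange]
  have hnF := LinearMap.finrank_range_add_finrank_ker (ψ.baseChange F)
  have hnK := LinearMap.finrank_range_add_finrank_ker (ψ.baseChange (IsLocalRing.ResidueField A))
  rw [Module.finrank_baseChange] at hnF hnK
  have hrK : Module.finrank (IsLocalRing.ResidueField A) (LinearMap.range (ψ.baseChange (IsLocalRing.ResidueField A))) = Module.finrank A p := by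
    omega
  have hKle : LinearMap.range (ψ.baseChange (IsLocalRing.ResidueField A)) ≤ p.baseChange (IsLocalRing.ResidueField A) := by
    rw [aux_range_baseChange]
    exact aux_baseChange_mono hle
  have hKfr : Module.finrank (IsLocalRing.ResidueField A) (p.baseChange (IsLocalRing.ResidueField A)) ≤ Module.finrank A p := by
    rw [hbcpK]
    exact le_trans (LinearMap.finrank_range_le _) (le_of_eq Module.finrank_baseChange)
  have heqK : LinearMap.range (ψ.baseChange (IsLocalRing.ResidueField A)) = p.baseChange (IsLocalRing.ResidueField A) :=
    Submodule.eq_of_le_of_finrank_le hKle (hKfr.trans hrK.ge)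
  -- Nakayama to get surjectivity onto p
  have hmem : ∀ x ∈ p, x ∈ LinearMap.range ψ ⊔
      (IsLocalRing.maximalIdeal A) • (⊤ : Submodule A L) := by
    intro x hx
    have h1 : (1 : (IsLocalRing.ResidueField A)) ⊗ₜ[A] x ∈ LinearMap.range (ψ.baseChange (IsLocalRing.ResidueField A)) := by
      rw [heqK]; exact Submodule.tmul_mem_baseChange_of_mem 1 hx
    rw [aux_range_baseChange, show (LinearMap.range ψ).baseChange (IsLocalRing.ResidueField A)
      = LinearMap.range (((LinearMap.range ψ).subtype).baseChange (IsLocalRing.ResidueField A)) by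
        rw [aux_range_baseChange, Submodule.range_subtype]] at h1
    obtain ⟨y, hy⟩ := h1
    have h2 : LinearMap.lTensor (IsLocalRing.ResidueField A) ((LinearMap.range ψ).mkQ) ((1 : (IsLocalRing.ResidueField A)) ⊗ₜ[A] x) = 0 := by
      have hm : (1 : (IsLocalRing.ResidueField A)) ⊗ₜ[A] x ∈
          LinearMap.ker (LinearMap.lTensor (IsLocalRing.ResidueField A) ((LinearMap.range ψ).mkQ)) := by
        rw [lTensor_mkQ]
        exact ⟨y, hy⟩
      exact LinearMap.mem_ker.mp hm
    rw [LinearMap.lTensor_tmul] at h2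
    have h3 : (LinearMap.range ψ).mkQ x ∈
        (IsLocalRing.maximalIdeal A) • (⊤ : Submodule A (L ⧸ LinearMap.range ψ)) :=
      (aux_tmul_eq_zero _ _).mp h2
    rw [show (⊤ : Submodule A (L ⧸ LinearMap.range ψ))
        = Submodule.map (LinearMap.range ψ).mkQ ⊤ by
          rw [Submodule.map_top, Submodule.range_mkQ],
      ← Submodule.map_smul''] at h3
    obtain ⟨z, hz, hzx⟩ := h3
    have hxz : x - z ∈ LinearMap.range ψ := by
      rw [← Submodule.Quotient.mk_eq_zero, Submodule.Quotient.mk_sub]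
      change (LinearMap.range ψ).mkQ x - (LinearMap.range ψ).mkQ z = 0
      rw [hzx, sub_self]
    exact Submodule.mem_sup.mpr ⟨x - z, hxz, z, hz, sub_add_cancel x z⟩
  have hple : p ≤ LinearMap.range ψ ⊔ (IsLocalRing.maximalIdeal A) • p := by
    intro x hx
    rcases Submodule.mem_sup.mp (hmem x hx) with ⟨n, hn, y, hy, hxny⟩
    have hyp : y ∈ p := by
      have : (n + y) - n ∈ p := sub_mem (hxny ▸ hx) (hle hn)
      rwa [add_sub_cancel_left] at this
    exact Submodule.mem_sup.mpr
      ⟨n, hn, y, aux_inf_smul_le hcompl _ ⟨hyp, hy⟩, hxny⟩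
  have part1 : LinearMap.range ψ = p :=
    le_antisymm hle (Submodule.le_of_le_smul_of_le_jacobson_bot (IsNoetherian.noetherian p)
      (IsLocalRing.maximalIdeal_le_jacobson ⊥) hple)
  refine ⟨part1, ?_⟩
  -- Part 2
  letI dec : DirectSum.Decomposition Lc := hinternal.chooseDecomposition
  have hcommKey : ∀ (i : ℕ) (x : L),
      ((DirectSum.decompose Lc (ψ x) (i+1) : Lc (i+1)) : L)
        = ψ ((DirectSum.decompose Lc x i : Lc i) : L) := by
    intro i x
    have hx : x ∈ ⨆ j, Lc j := htop ▸ Submodule.mem_top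
    refine Submodule.iSup_induction (motive := fun x =>
      ((DirectSum.decompose Lc (ψ x) (i+1) : Lc (i+1)) : L)
        = ψ ((DirectSum.decompose Lc x i : Lc i) : L)) Lc hx ?_ ?_ ?_
    · intro m y hy
      have hψy : ψ y ∈ Lc (m+1) := hdeg m ⟨y, hy, rfl⟩
      by_cases hmi : m = i
      · subst hmi
        rw [DirectSum.decompose_of_mem_same Lc hψy, DirectSum.decompose_of_mem_same Lc hy]
      · rw [DirectSum.decompose_of_mem_ne Lc hψy (by omega),
          DirectSum.decompose_of_mem_ne Lc hy hmi, map_zero]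
    · simp
    · intro a b ha hb
      rw [map_add, DirectSum.decompose_add, DirectSum.decompose_add, DirectSum.add_apply,
        DirectSum.add_apply, Submodule.coe_add, Submodule.coe_add, ha, hb, map_add]
  have key2 : ∀ i : ℕ, Lc (i+1) ≤ Submodule.map ψ (Lc i) := by
    intro i x hx
    have hxp : x ∈ LinearMap.range ψ :=
      part1 ▸ hLcle (i+1) (Nat.succ_le_succ (Nat.zero_le i)) hx
    obtain ⟨y, rfl⟩ := hxp
    refine ⟨((DirectSum.decompose Lc y i : Lc i) : L), Submodule.coe_mem _, ?_⟩
    rw [← hcommKey i y, DirectSum.decompose_of_mem_same Lc hx]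
  have key3 : ∀ j : ℕ, Lc j ≤ LinearMap.range (ψ ^ j) := by
    intro j
    induction j with
    | zero => intro x _; exact ⟨x, rfl⟩
    | succ j ih =>
      refine (key2 j).trans ?_
      calc Submodule.map ψ (Lc j) ≤ Submodule.map ψ (LinearMap.range (ψ^j)) :=
            Submodule.map_mono ih
        _ = LinearMap.range (ψ ∘ₗ ψ^j) := (LinearMap.range_comp _ _).symm
        _ = LinearMap.range (ψ^(j+1)) := by rw [← Module.End.mul_eq_comp, ← pow_succ']
  have hcomplD : IsCompl (Lc d) (⨆ j, ⨆ _ : j ≠ d, Lc j) := by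
    constructor
    · exact hindep d
    · rw [codisjoint_iff, ← top_le_iff, ← htop]
      refine iSup_le fun i => ?_
      by_cases h : i = d
      · subst h; exact le_sup_left
      · exact le_sup_of_le_right (le_iSup_of_le i (le_iSup_of_le h le_rfl))
  intro hzero
  have hLcd : Lc d ≤ (IsLocalRing.maximalIdeal A) • Lc d := by
    intro x hx
    obtain ⟨y, hy⟩ := key3 d hx
    have h1 : (1 : (IsLocalRing.ResidueField A)) ⊗ₜ[A] x = 0 := by
      have he : (1 : (IsLocalRing.ResidueField A)) ⊗ₜ[A] x = ((ψ ^ d).baseChange (IsLocalRing.ResidueField A)) ((1 : (IsLocalRing.ResidueField A)) ⊗ₜ[A] y) := by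
        rw [LinearMap.baseChange_tmul, hy]
      rw [he, LinearMap.baseChange_pow, hzero]
      rfl
    have h2 : x ∈ (IsLocalRing.maximalIdeal A) • (⊤ : Submodule A L) :=
      (aux_tmul_eq_zero _ x).mp h1
    exact aux_inf_smul_le hcomplD _ ⟨hx, h2⟩
  exact hd (Submodule.eq_bot_of_le_smul_of_le_jacobson_bot (IsLocalRing.maximalIdeal A) (Lc d)
      (IsNoetherian.noetherian _) hLcd (IsLocalRing.maximalIdeal_le_jacobson ⊥))
end

section
/- Let k be a commutative ring of prime characteristic p, and consider the k-derivation D = ∂/∂X + X^{p−1}·∂/∂Y of the polynomial ring k[X,Y]. Then the p-th power of D (composition of k-linear endomorphisms of k[X,Y]) is again a derivation, and D^p = (p−1)!·∂/∂Y = −∂/∂Y. In particular, the k-span of D and ∂/∂Y is a 2-dimensional abelian Lie subalgebra of the derivations of k[X,Y] that is closed under taking p-th powers, with D and D^p as a basis (this realizes the Lie algebra of the Witt group W_2). -/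
open MvPolynomial Finset

section Aux

variable {R : Type*} [CommRing R] {A : Type*} [CommRing A] [Algebra R A]

/-- Iterated Leibniz rule for a derivation. -/
lemma iter_leibniz (D : Derivation R A A) (n : ℕ) (a b : A) :
    (D.toLinearMap ^ n) (a * b) =
      ∑ k ∈ range (n + 1),
        n.choose k • ((D.toLinearMap ^ (n - k)) a * (D.toLinearMap ^ k) b) := by
  have happ : ∀ (m : ℕ) (x : A),
      (D.toLinearMap ^ (m + 1)) x = (D.toLinearMap ^ m) (D.toLinearMap x) := by
    intro m x; rw [pow_succ]; rfl
  induction n generalizing a b with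
  | zero => simp
  | succ n IH =>
    set f := D.toLinearMap with hf
    have hDmul : f (a * b) = a * f b + b * f a := by
      show D (a * b) = a * D b + b * D a
      rw [D.leibniz, smul_eq_mul, smul_eq_mul]
    rw [happ, hDmul, map_add, IH a (f b), IH b (f a)]
    simp only [← happ]
    have hS2 : (∑ j ∈ range (n + 2), n.choose j • ((f ^ (n + 1 - j)) a * (f ^ j) b)) =
        ∑ k ∈ range (n + 1), n.choose k • ((f ^ (n - k)) b * (f ^ (k + 1)) a) := by
      rw [Finset.sum_range_succ, Nat.choose_succ_self, zero_smul, add_zero,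
        ← Finset.sum_range_reflect]
      refine Finset.sum_congr rfl fun j hj => ?_
      rw [Finset.mem_range] at hj
      have hj' : j ≤ n := by omega
      have h1 : n + 1 - 1 - j = n - j := by omega
      have h2 : n + 1 - (n - j) = j + 1 := by omega
      rw [h1, Nat.choose_symm hj', h2, mul_comm]
    rw [← hS2,
      Finset.sum_range_succ' (fun j => n.choose j • ((f ^ (n + 1 - j)) a * (f ^ j) b)) (n + 1),
      Finset.sum_range_succ'
        (fun j => (n + 1).choose j • ((f ^ (n + 1 - j)) a * (f ^ j) b)) (n + 1)]
    simp only [Nat.choose_succ_succ, add_smul, Finset.sum_add_distrib, Nat.succ_sub_succ,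
      Nat.choose_zero_right, one_smul, Nat.sub_zero, pow_zero, Module.End.one_apply]
    abel

end Aux

/-- Wilson's theorem in a ring of characteristic `p`. -/
lemma wilson_char {p : ℕ} (hp : p.Prime) (R : Type*) [Ring R] [CharP R p] :
    (((p - 1).factorial : R)) = -1 := by
  haveI : Fact p.Prime := ⟨hp⟩
  have h := ZMod.wilsons_lemma p
  have := congrArg (ZMod.castHom (dvd_refl p) R) h
  rw [map_natCast] at this
  rw [this, map_neg, map_one]

open MvPolynomial

/-- let `k` be a commutative ring of prime characteristic `p`, and consider
the `k`-derivation `D = ∂/∂X + X^(p-1) ∂/∂Y` of `k[X,Y]`.  Then the `p`-th power of `D`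
(composition of `k`-linear endomorphisms of `k[X,Y]`) is again a derivation: indeed
`D^p = (p-1)! • ∂/∂Y = -∂/∂Y`.  In particular `D` and `∂/∂Y` commute, so the `k`-span of
`D` and `D^p = -∂/∂Y` is a 2-dimensional abelian Lie subalgebra of the derivations of
`k[X,Y]`, closed under `p`-th powers (realizing the Lie algebra of the Witt group `W₂`). -/
theorem stmt11 (p : ℕ) (hp : p.Prime) (k : Type*) [CommRing k] [CharP k p]
    (D : Derivation k (MvPolynomial (Fin 2) k) (MvPolynomial (Fin 2) k))
    (hD : D = pderiv 0 + (X 0 : MvPolynomial (Fin 2) k) ^ (p - 1) • pderiv 1) :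
    D.toLinearMap ^ p = (((p - 1).factorial : k)) • (pderiv (R := k) (1 : Fin 2)).toLinearMap
      ∧ D.toLinearMap ^ p = -(pderiv (R := k) (1 : Fin 2)).toLinearMap
      ∧ Commute D.toLinearMap (pderiv (R := k) (1 : Fin 2)).toLinearMap := by
  set A := MvPolynomial (Fin 2) k
  set f := D.toLinearMap with hf
  have happ : ∀ (m : ℕ) (x : A), (f ^ (m + 1)) x = (f ^ m) (f x) := by
    intro m x; rw [pow_succ]; rfl
  -- basic computations
  have hDX0 : D (X 0) = 1 := by
    rw [hD]
    simp [pderiv_X_self, pderiv_X_of_ne (show (0 : Fin 2) ≠ 1 by decide)]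
  have hDX1 : D (X 1) = (X 0 : A) ^ (p - 1) := by
    rw [hD]
    simp [pderiv_X_self, pderiv_X_of_ne (show (1 : Fin 2) ≠ 0 by decide), smul_eq_mul]
  -- f^(m+1) kills 1
  have h1 : ∀ m : ℕ, (f ^ (m + 1)) (1 : A) = 0 := by
    intro m
    rw [happ]
    have : f (1 : A) = 0 := D.map_one_eq_zero
    rw [this, map_zero]
  -- f^a (X0^a) = a!
  have hfact : ∀ a : ℕ, (f ^ a) ((X 0 : A) ^ a) = (a.factorial : A) := by
    intro a
    induction a with
    | zero => simp
    | succ a IH =>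
      rw [happ]
      have hx : f ((X 0 : A) ^ (a + 1)) = (a + 1) • (X 0 : A) ^ a := by
        show D ((X 0 : A) ^ (a + 1)) = (a + 1) • (X 0 : A) ^ a
        rw [D.leibniz_pow, hDX0]
        simp
      rw [hx, map_nsmul, IH, Nat.factorial_succ]
      push_cast
      ring
  -- f^p is a derivation via the iterated Leibniz rule
  haveI : CharP A p := by
    show CharP (MvPolynomial (Fin 2) k) p
    infer_instance
  have hleib : ∀ a b : A, (f ^ p) (a * b) = a • (f ^ p) b + b • (f ^ p) a := by
    obtain ⟨m, hm⟩ : ∃ m, p = m + 1 := ⟨p - 1, (Nat.succ_pred_eq_of_pos hp.pos).symm⟩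
    intro a b
    rw [hm, hf, iter_leibniz D (m + 1) a b, Finset.sum_range_succ, Finset.sum_range_succ']
    have hmid : ∑ j ∈ Finset.range m, (m + 1).choose (j + 1) •
        ((D.toLinearMap ^ (m + 1 - (j + 1))) a * (D.toLinearMap ^ (j + 1)) b) = 0 := by
      refine Finset.sum_eq_zero fun j hj => ?_
      rw [Finset.mem_range] at hj
      have hdvd : p ∣ (m + 1).choose (j + 1) := by
        rw [← hm]
        exact hp.dvd_choose_self (Nat.succ_ne_zero j) (by omega)
      rw [nsmul_eq_mul, (CharP.cast_eq_zero_iff A p _).2 hdvd, zero_mul]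
    rw [hmid]
    simp [smul_eq_mul, mul_comm, add_comm]
  set E := pderiv (R := k) (1 : Fin 2) with hE
  have hfp1 : (f ^ p) (1 : A) = 0 := by
    obtain ⟨m, hm⟩ : ∃ m, p = m + 1 := ⟨p - 1, by have := hp.pos; omega⟩
    rw [hm]; exact h1 m
  let D' : Derivation k A A := Derivation.mk' (f ^ p) hleib
  -- values of f^p on generators
  have hfpX0 : (f ^ p) ((X 0 : A)) = 0 := by
    obtain ⟨m, hm⟩ : ∃ m, p = m + 1 + 1 := ⟨p - 2, by have := hp.two_le; omega⟩
    rw [hm, happ]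
    have : f (X 0 : A) = 1 := hDX0
    rw [this]
    exact h1 m
  have hfpX1 : (f ^ p) ((X 1 : A)) = -1 := by
    obtain ⟨m, hm⟩ : ∃ m, p = m + 1 ∧ m = p - 1 := ⟨p - 1, by have := hp.pos; omega, rfl⟩
    obtain ⟨hm1, hm2⟩ := hm
    rw [hm1, happ]
    have : f (X 1 : A) = (X 0 : A) ^ m := by rw [← hm2] at hDX1; exact hDX1
    rw [this, hfact m, hm2]
    exact wilson_char hp A
  -- D' = -(pderiv 1)
  have hD' : D' = -E := by
    apply MvPolynomial.derivation_ext
    intro i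
    fin_cases i
    · show (f ^ p) (X 0 : A) = (-E) (X 0)
      rw [hfpX0, Derivation.neg_apply, hE, pderiv_X_of_ne (show (0 : Fin 2) ≠ 1 by decide),
        neg_zero]
    · show (f ^ p) (X 1 : A) = (-E) (X 1)
      rw [hfpX1, Derivation.neg_apply, hE, pderiv_X_self]
  have key : f ^ p = -E.toLinearMap := by
    apply LinearMap.ext
    intro x
    have := DFunLike.congr_fun hD' x
    simpa [D'] using this
  refine ⟨?_, key, ?_⟩
  · rw [key, wilson_char hp k]
    exact (neg_one_smul k (E.toLinearMap)).symm
  · -- commutation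
    have hbr : ⁅D, E⁆ = 0 := by
      apply MvPolynomial.derivation_ext
      intro i
      fin_cases i
      · show ⁅D, E⁆ (X 0) = (0 : Derivation k A A) (X 0)
        rw [Derivation.commutator_apply, hE,
          pderiv_X_of_ne (show (0 : Fin 2) ≠ 1 by decide), hDX0, map_zero,
          Derivation.map_one_eq_zero]
        simp
      · show ⁅D, E⁆ (X 1) = (0 : Derivation k A A) (X 1)
        rw [Derivation.commutator_apply, hE, pderiv_X_self, hDX1,
          Derivation.map_one_eq_zero]
        have : (pderiv (R := k) (1 : Fin 2)) ((X 0 : A) ^ (p - 1)) = 0 := by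
          rw [(pderiv (R := k) (1 : Fin 2)).leibniz_pow,
            pderiv_X_of_ne (show (0 : Fin 2) ≠ 1 by decide)]
          simp
        rw [this]
        simp
    have := congrArg (Derivation.toLinearMap) hbr
    rw [Derivation.commutator_coe_linear_map] at this
    have hcomm : D.toLinearMap * E.toLinearMap - E.toLinearMap * D.toLinearMap = 0 := by
      rw [← Ring.lie_def]
      simpa using this
    exact sub_eq_zero.mp hcomm
end

section
/- Let p be a prime, let L be a finite free module over ℤ_(p) (the localization of ℤ at p), and let V = L ⊗_{ℤ_(p)} ℚ. Suppose u is a ℚ-linear endomorphism of V such that u(L) ⊆ L, u^p(L) ⊆ p·L, and u^{p^2} = 0. Then the endomorphism exp(u) = ∑_{i=0}^{p^2−1} u^i/i! of V maps L into L; that is, for every i ≥ 0 and every v ∈ L, the element u^i(v)/i! lies in L. -/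
set_option synthInstance.maxHeartbeats 1000000

/-- let `p` be a prime, let `R ⊆ ℚ` be the subring `ℤ_(p)` of rationals
whose denominator is prime to `p` (i.e. with nonnegative `p`-adic valuation), let `V` be
a `ℚ`-vector space, and let `L` be an `R`-submodule of `V` which is a finite free
`R`-module spanning `V` over `ℚ` (a `ℤ_(p)`-lattice, `V = L ⊗ ℚ`).  Let `u` be a
`ℚ`-linear endomorphism of `V` with `u(L) ⊆ L`, `u^p(L) ⊆ p·L` and `u^(p²) = 0`.  Then
`exp(u) = ∑_{i} u^i / i!` maps `L` into `L`: for every `i ≥ 0` and every `v ∈ L`, the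
element `u^i(v)/i!` lies in `L`. -/
theorem stmt12 (p : ℕ) (hp : p.Prime)
    (R : Subring ℚ) (hR : ∀ q : ℚ, q ∈ R ↔ ¬ (p : ℕ) ∣ q.den)
    (V : Type*) [AddCommGroup V] [Module ℚ V]
    (L : Submodule R V) [Module.Finite R L] [Module.Free R L]
    (hspan : Submodule.span ℚ (L : Set V) = ⊤)
    (u : V →ₗ[ℚ] V)
    (huL : ∀ v ∈ L, u v ∈ L)
    (hup : ∀ v ∈ L, ∃ w ∈ L, (u ^ p) v = (p : ℚ) • w)
    (hu2 : u ^ (p ^ 2) = 0) :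
    ∀ (i : ℕ), ∀ v ∈ L, ((i.factorial : ℚ)⁻¹) • (u ^ i) v ∈ L := by
  haveI : Fact p.Prime := ⟨hp⟩
  -- powers of u preserve L
  have hpow : ∀ (r : ℕ), ∀ v ∈ L, (u ^ r) v ∈ L := by
    intro r
    induction r with
    | zero => intro v hv; simpa using hv
    | succ n ih =>
      intro v hv
      rw [pow_succ, Module.End.mul_apply]
      exact ih _ (huL v hv)
  -- (u^p)^q v ∈ p^q • L
  have hkey : ∀ (q : ℕ), ∀ v ∈ L, ∃ w ∈ L, (u ^ (p * q)) v = ((p : ℚ) ^ q) • w := by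
    intro q
    induction q with
    | zero => intro v hv; exact ⟨v, hv, by simp⟩
    | succ n ih =>
      intro v hv
      obtain ⟨w, hw, hw'⟩ := hup v hv
      obtain ⟨w', hw1, hw2⟩ := ih w hw
      refine ⟨w', hw1, ?_⟩
      have : u ^ (p * (n + 1)) = u ^ (p * n) * u ^ p := by
        rw [← pow_add]; ring_nf
      rw [this, Module.End.mul_apply, hw', map_smul, hw2, smul_smul, ← pow_succ']
  intro i v hv
  by_cases hi : p ^ 2 ≤ i
  · -- u^i = 0
    have : u ^ i = 0 := by
      have : u ^ i = u ^ (i - p ^ 2) * u ^ (p ^ 2) := by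
        rw [← pow_add, Nat.sub_add_cancel hi]
      rw [this, hu2, mul_zero]
    simp [this]
  · push_neg at hi
    set q := i / p with hq
    set r := i % p with hr
    -- valuation of i!
    have hlog : Nat.log p i < 2 := by
      rcases Nat.eq_zero_or_pos i with h0 | h0
      · simp [h0]
      · exact Nat.log_lt_of_lt_pow h0.ne' hi
    have hval : padicValNat p (i.factorial) = q := by
      rw [padicValNat_factorial (p := p) hlog]
      simp [hq]
    set m := Nat.factorial i / p ^ q with hm
    have hfac : p ^ q * m = Nat.factorial i := by
      rw [hm, ← hval]
      have := Nat.ordProj_mul_ordCompl_eq_self (Nat.factorial i) p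
      rwa [Nat.factorization_def _ hp] at this
    have hmpos : 0 < m := by
      rcases Nat.eq_zero_or_pos m with h | h
      · exfalso; rw [h, mul_zero] at hfac
        exact (Nat.factorial_pos i).ne' hfac.symm
      · exact h
    have hpm : ¬ p ∣ m := by
      rw [hm, ← hval]
      have := Nat.not_dvd_ordCompl hp (Nat.factorial_pos i).ne'
      rwa [Nat.factorization_def _ hp] at this
    -- the scalar c = p^q / i! = 1/m
    set c : ℚ := ((i.factorial : ℚ)⁻¹) * (p : ℚ) ^ q with hc
    have hcm : c = ((m : ℚ))⁻¹ := by
      rw [hc]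
      have : (i.factorial : ℚ) = (p : ℚ) ^ q * (m : ℚ) := by
        rw [← hfac]; push_cast; ring
      rw [this]
      have hpq : (0:ℚ) < p := by exact_mod_cast hp.pos
      have hp0 : ((p : ℚ) ^ q) ≠ 0 := by positivity
      field_simp
    have hcR : c ∈ R := by
      rw [hR, hcm, Rat.inv_natCast_den_of_pos hmpos]
      exact hpm
    -- decompose u^i
    obtain ⟨w, hw, hw'⟩ := hkey q v hv
    have hdecomp : (u ^ i) v = ((p : ℚ) ^ q) • ((u ^ r) w) := by
      have : u ^ i = u ^ r * u ^ (p * q) := by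
        rw [← pow_add]
        congr 1
        rw [hr, hq]
        exact (Nat.mod_add_div i p).symm
      rw [this, Module.End.mul_apply, hw', map_smul]
    rw [hdecomp, smul_smul, ← hc]
    have hwr : (u ^ r) w ∈ L := hpow r w hw
    have := L.smul_mem (⟨c, hcR⟩ : R) hwr
    convert this using 1
    rfl
end
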